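/- arXiv:1604.06171 — 5 statements merged into one kernel-verified Lean document; each statement's English description precedes it below -/
import Mathlib

section
/- Let T ⊂ ℝ^d be a compact convex set with nonempty interior, λ ∈ (0,1), and let T' ⊆ T be a homothetic image of T with scaling factor λ (i.e., T' = {λ(x−x₀)+x₀ : x ∈ T} for some x₀). Then for every polynomial v of degree at most p on ℝ^d, ‖v‖_{L²(T)} ≤ C(λ,p+1)·‖v‖_{L²(T')}, where the constant depends only on λ, p, and d, and not on the shape of T. -/
open MeasureTheory Polynomial

-- continuity of mv polynomial eval on EuclideanSpace
lemma contEvalAux (d : ℕ) (q : MvPolynomial (Fin d) ℝ) :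
    Continuous fun x : EuclideanSpace ℝ (Fin d) => MvPolynomial.eval (fun i => x i) q := by
  induction q using MvPolynomial.induction_on with
  | C a => simpa using continuous_const
  | add p q hp hq => simp only [map_add]; exact hp.add hq
  | mul_X p i hp => simp only [map_mul, MvPolynomial.eval_X]; exact hp.mul (by fun_prop)

-- natDegree of eval₂ into Polynomial R
lemma natDegree_eval₂_le {R : Type*} [CommRing R] {d : ℕ}
    (f : ℝ →+* Polynomial R) (hf : ∀ r, (f r).natDegree = 0)
    (g : Fin d → Polynomial R) (hg : ∀ i, (g i).natDegree ≤ 1)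
    (v : MvPolynomial (Fin d) ℝ) :
    (MvPolynomial.eval₂ f g v).natDegree ≤ v.totalDegree := by
  conv_lhs => rw [v.as_sum, MvPolynomial.eval₂_sum]
  apply Polynomial.natDegree_sum_le_of_forall_le
  intro u hu
  rw [MvPolynomial.eval₂_monomial]
  refine le_trans (Polynomial.natDegree_mul_le) ?_
  rw [hf]
  simp only [zero_add]
  refine le_trans ?_ (MvPolynomial.le_totalDegree hu)
  rw [Finsupp.prod]
  refine le_trans (Polynomial.natDegree_prod_le u.support (fun a => g a ^ u a)) ?_
  have : ∀ i ∈ u.support, ((g i) ^ (u i)).natDegree ≤ u i := by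
    intro i _
    refine le_trans (Polynomial.natDegree_pow_le) ?_
    calc u i * (g i).natDegree ≤ u i * 1 := Nat.mul_le_mul_left _ (hg i)
    _ = u i := Nat.mul_one _
  refine le_trans (Finset.sum_le_sum this) ?_
  rw [Finsupp.sum]

lemma lagrange_bound {n : ℕ} (t : Fin n → ℝ) (ht : Function.Injective t)
    (P : Polynomial ℝ) (hP : P.natDegree < n) (M : ℝ) (hM : 0 ≤ M)
    (h0 : ∀ i, 0 ≤ P.eval (t i)) (h1 : ∀ i, P.eval (t i) ≤ M) :
    P.eval 1 ≤ (∑ i, |(Lagrange.basis Finset.univ t i).eval 1|) * M := by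
  have hinj : Set.InjOn t (Finset.univ : Finset (Fin n)) := ht.injOn
  have hdeg : P.degree < (Finset.univ : Finset (Fin n)).card := by
    rw [Finset.card_univ, Fintype.card_fin]
    exact lt_of_le_of_lt Polynomial.degree_le_natDegree (by exact_mod_cast hP)
  have hrep := Lagrange.eq_interpolate hinj hdeg
  calc P.eval 1 = (Lagrange.interpolate Finset.univ t fun i => P.eval (t i)).eval 1 := by
        rw [← hrep]
    _ = ∑ i, P.eval (t i) * (Lagrange.basis Finset.univ t i).eval 1 := by
        rw [Lagrange.interpolate_apply]
        rw [Polynomial.eval_finset_sum]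
        simp [Polynomial.eval_mul]
    _ ≤ ∑ i, |(Lagrange.basis Finset.univ t i).eval 1| * M := by
        apply Finset.sum_le_sum
        intro i _
        calc P.eval (t i) * (Lagrange.basis Finset.univ t i).eval 1
            ≤ |P.eval (t i) * (Lagrange.basis Finset.univ t i).eval 1| := le_abs_self _
          _ = |P.eval (t i)| * |(Lagrange.basis Finset.univ t i).eval 1| := abs_mul _ _
          _ ≤ M * |(Lagrange.basis Finset.univ t i).eval 1| := by
              apply mul_le_mul_of_nonneg_right _ (abs_nonneg _)
              rw [abs_of_nonneg (h0 i)]; exact h1 i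
          _ = |(Lagrange.basis Finset.univ t i).eval 1| * M := mul_comm _ _
    _ = (∑ i, |(Lagrange.basis Finset.univ t i).eval 1|) * M := by rw [Finset.sum_mul]

lemma cov_homothety (d : ℕ) (x₀ : EuclideanSpace ℝ (Fin d)) (s : ℝ) (hs : 0 < s)
    (T : Set (EuclideanSpace ℝ (Fin d))) (hT : MeasurableSet T)
    (g : EuclideanSpace ℝ (Fin d) → ℝ) :
    ∫ y in (fun x => x₀ + s • (x - x₀)) '' T, g y =
      ∫ x in T, s ^ d * g (x₀ + s • (x - x₀)) := by
  have hdet : (s • (1 : EuclideanSpace ℝ (Fin d) →L[ℝ] EuclideanSpace ℝ (Fin d))).det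
      = s ^ d := by
    have h : LinearMap.det (s • (LinearMap.id : EuclideanSpace ℝ (Fin d) →ₗ[ℝ]
        EuclideanSpace ℝ (Fin d))) = s ^ d := by
      rw [LinearMap.det_smul]; simp [finrank_euclideanSpace_fin]
    rw [← h]; rfl
  have hf' : ∀ x ∈ T, HasFDerivWithinAt (fun x => x₀ + s • (x - x₀))
      (s • (1 : EuclideanSpace ℝ (Fin d) →L[ℝ] EuclideanSpace ℝ (Fin d))) T x := by
    intro x _
    exact ((((hasFDerivAt_id x).sub_const x₀).const_smul s).const_add x₀).hasFDerivWithinAt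
  have hinj : Set.InjOn (fun x => x₀ + s • (x - x₀)) T := by
    intro a _ b _ hab
    simp only [add_right_inj] at hab
    have := smul_right_injective (EuclideanSpace ℝ (Fin d)) hs.ne' hab
    exact sub_left_injective this
  rw [integral_image_eq_integral_abs_det_fderiv_smul volume hT hf' hinj g]
  congr 1
  ext x
  rw [hdet, abs_of_pos (pow_pos hs d), smul_eq_mul]

lemma key_eval (d : ℕ) (x₀ : EuclideanSpace ℝ (Fin d)) (v : MvPolynomial (Fin d) ℝ)
    (x : EuclideanSpace ℝ (Fin d)) (s : ℝ) :
    Polynomial.eval s (Polynomial.map (MvPolynomial.eval (fun i => x i))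
      (MvPolynomial.eval₂ ((Polynomial.C).comp MvPolynomial.C)
        (fun i => Polynomial.C (MvPolynomial.C (x₀ i)) +
          Polynomial.X * Polynomial.C (MvPolynomial.X i - MvPolynomial.C (x₀ i))) v))
    = MvPolynomial.eval (fun i => x₀ i + s * (x i - x₀ i)) v := by
  set k := (Polynomial.evalRingHom s).comp
    (Polynomial.mapRingHom (MvPolynomial.eval (fun i => x i))) with hk
  have h1 : Polynomial.eval s (Polynomial.map (MvPolynomial.eval (fun i => x i))
      (MvPolynomial.eval₂ ((Polynomial.C).comp MvPolynomial.C)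
        (fun i => Polynomial.C (MvPolynomial.C (x₀ i)) +
          Polynomial.X * Polynomial.C (MvPolynomial.X i - MvPolynomial.C (x₀ i))) v))
      = k (MvPolynomial.eval₂ ((Polynomial.C).comp MvPolynomial.C)
        (fun i => Polynomial.C (MvPolynomial.C (x₀ i)) +
          Polynomial.X * Polynomial.C (MvPolynomial.X i - MvPolynomial.C (x₀ i))) v) := rfl
  rw [h1, MvPolynomial.eval₂_comp_left k]
  have h2 : k.comp ((Polynomial.C).comp MvPolynomial.C) = RingHom.id ℝ := by
    ext r; simp [hk]
  rw [h2]
  rw [MvPolynomial.eval₂_id]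
  have h3 : (⇑k ∘ fun i => C (MvPolynomial.C (x₀ i)) +
      X * C (MvPolynomial.X i - MvPolynomial.C (x₀ i))) = fun i => x₀ i + s * (x i - x₀ i) := by
    funext i
    simp [hk, Function.comp, mul_comm]
  rw [h3]


open MeasureTheory

/-- Lemma 2.2: if `T ⊂ ℝ^d` is a compact convex set with nonempty interior and `T'` is a
homothetic image of `T` with scaling factor `λ ∈ (0,1)` contained in `T`, then for every
polynomial `v` of total degree at most `p`,
`‖v‖_{L²(T)} ≤ C(λ,p,d) ‖v‖_{L²(T')}` with a constant independent of the shape of `T`. -/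
theorem l2_norm_equivalence_homothety (d p : ℕ) (hd : 1 ≤ d) (lam : ℝ)
    (hlam : lam ∈ Set.Ioo (0:ℝ) 1) :
    ∃ C > 0, ∀ (T : Set (EuclideanSpace ℝ (Fin d))) (x₀ : EuclideanSpace ℝ (Fin d)),
      IsCompact T → Convex ℝ T → (interior T).Nonempty →
      (fun x => x₀ + lam • (x - x₀)) '' T ⊆ T →
      ∀ v : MvPolynomial (Fin d) ℝ, v.totalDegree ≤ p →
        Real.sqrt (∫ x in T, (MvPolynomial.eval (fun i => x i) v) ^ 2) ≤
          C * Real.sqrt (∫ x in (fun x => x₀ + lam • (x - x₀)) '' T,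
            (MvPolynomial.eval (fun i => x i) v) ^ 2) := by
  obtain ⟨hlam0, hlam1⟩ := hlam
  -- nodes
  set t : Fin (2*p+1) → ℝ := fun i => lam/2 + ((i:ℝ)+1) * ((lam/2)/(2*(p:ℝ)+1)) with htdef
  have hden : (0:ℝ) < 2*(p:ℝ)+1 := by positivity
  have ht_ge : ∀ i, lam/2 ≤ t i := by
    intro i
    have : (0:ℝ) ≤ ((i:ℝ)+1) * ((lam/2)/(2*(p:ℝ)+1)) := by positivity
    simp only [htdef]; linarith
  have ht_pos : ∀ i, 0 < t i := fun i => lt_of_lt_of_le (by linarith) (ht_ge i)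
  have ht_le : ∀ i, t i ≤ lam := by
    intro i
    have hi : ((i:ℝ)+1) ≤ 2*(p:ℝ)+1 := by
      have : (i:ℕ) < 2*p+1 := i.isLt
      have : ((i:ℕ):ℝ) ≤ 2*(p:ℝ) := by exact_mod_cast Nat.lt_succ_iff.mp this
      linarith
    have h1 : ((i:ℝ)+1) * ((lam/2)/(2*(p:ℝ)+1)) ≤ (2*(p:ℝ)+1) * ((lam/2)/(2*(p:ℝ)+1)) := by
      apply mul_le_mul_of_nonneg_right hi; positivity
    have h2 : (2*(p:ℝ)+1) * ((lam/2)/(2*(p:ℝ)+1)) = lam/2 := by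
      field_simp
    simp only [htdef]; linarith
  have ht_inj : Function.Injective t := by
    intro i j hij
    have h : ((i:ℝ)+1) * ((lam/2)/(2*(p:ℝ)+1)) = ((j:ℝ)+1) * ((lam/2)/(2*(p:ℝ)+1)) := by
      simp only [htdef] at hij; linarith
    have hk : (0:ℝ) < (lam/2)/(2*(p:ℝ)+1) := by positivity
    have : ((i:ℝ)+1) = ((j:ℝ)+1) := mul_right_cancel₀ hk.ne' h
    have : ((i:ℕ):ℝ) = ((j:ℕ):ℝ) := by push_cast at this ⊢; linarith
    exact Fin.ext (Nat.cast_injective this)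
  set B : ℝ := ∑ i, |(Lagrange.basis Finset.univ t i).eval 1| with hBdef
  clear_value t
  have hB : 0 ≤ B := Finset.sum_nonneg fun i _ => abs_nonneg _
  have hconst : (0:ℝ) ≤ (2^d * B) / lam^d := by positivity
  refine ⟨max 1 (Real.sqrt ((2^d * B) / lam^d)), lt_of_lt_of_le one_pos (le_max_left _ _), ?_⟩
  intro T x₀ hTc hTconv hTint hsub v hv
  have hTm : MeasurableSet T := hTc.measurableSet
  -- x₀ ∈ T
  have hx₀T : x₀ ∈ T := by
    obtain ⟨y, hy⟩ := hTint
    have hyT : y ∈ T := interior_subset hy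
    have hmem : ∀ m : ℕ, x₀ + lam^m • (y - x₀) ∈ T := by
      intro m
      induction m with
      | zero => simpa using hyT
      | succ m ih =>
        have h2 := hsub ⟨_, ih, rfl⟩
        have h3 : x₀ + lam • (x₀ + lam ^ m • (y - x₀) - x₀) = x₀ + lam^(m+1) • (y - x₀) := by
          rw [add_sub_cancel_left, smul_smul, ← pow_succ']
        have h2' : x₀ + lam • (x₀ + lam ^ m • (y - x₀) - x₀) ∈ T := h2
        rwa [h3] at h2'
    have hlim : Filter.Tendsto (fun m : ℕ => x₀ + lam^m • (y - x₀)) Filter.atTop (nhds x₀) := by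
      have h0 : Filter.Tendsto (fun m : ℕ => lam^m) Filter.atTop (nhds 0) :=
        tendsto_pow_atTop_nhds_zero_of_lt_one hlam0.le hlam1
      have h1 := h0.smul_const (y - x₀)
      rw [zero_smul] at h1
      simpa using Filter.Tendsto.const_add x₀ h1
    exact hTc.isClosed.mem_of_tendsto hlim (Filter.Eventually.of_forall hmem)
  set U : Polynomial (MvPolynomial (Fin d) ℝ) :=
    (MvPolynomial.eval₂ ((Polynomial.C).comp MvPolynomial.C)
      (fun i => Polynomial.C (MvPolynomial.C (x₀ i)) +
        Polynomial.X * Polynomial.C (MvPolynomial.X i - MvPolynomial.C (x₀ i))) v)^2 with hUdef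
  have hgdeg : ∀ i : Fin d, (Polynomial.C (MvPolynomial.C (x₀ i)) +
      Polynomial.X * Polynomial.C (MvPolynomial.X i - MvPolynomial.C (x₀ i))).natDegree ≤ 1 := by
    intro i
    refine le_trans (Polynomial.natDegree_add_le _ _) (max_le (by simp) ?_)
    refine le_trans (Polynomial.natDegree_mul_le) (by simp)
  have hWdeg := natDegree_eval₂_le ((Polynomial.C).comp MvPolynomial.C)
      (fun r => by simp) _ hgdeg v
  have hUdeg : U.natDegree ≤ 2*p := by
    refine le_trans Polynomial.natDegree_pow_le ?_
    exact Nat.mul_le_mul_left 2 (le_trans hWdeg hv)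
  have hpt : ∀ (x : EuclideanSpace ℝ (Fin d)) (s : ℝ),
      (MvPolynomial.eval (fun i => x₀ i + s * (x i - x₀ i)) v)^2
        = ∑ m ∈ Finset.range (2*p+1),
            (MvPolynomial.eval (fun i => x i) (U.coeff m)) * s^m := by
    intro x s
    have h1 : (MvPolynomial.eval (fun i => x₀ i + s * (x i - x₀ i)) v)^2
        = Polynomial.eval s (Polynomial.map (MvPolynomial.eval (fun i => x i)) U) := by
      rw [hUdef, Polynomial.map_pow, Polynomial.eval_pow, key_eval]
    rw [h1, Polynomial.eval_eq_sum_range'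
      (lt_of_le_of_lt (le_trans Polynomial.natDegree_map_le hUdeg) (Nat.lt_succ_self _))]
    refine Finset.sum_congr rfl fun m _ => ?_
    rw [Polynomial.coeff_map]
  set a : ℕ → ℝ := fun m => ∫ x in T, MvPolynomial.eval (fun i => x i) (U.coeff m) with hadef
  set P : Polynomial ℝ := ∑ m ∈ Finset.range (2*p+1), Polynomial.C (a m) * Polynomial.X^m
    with hPdef
  have hPdeg : P.natDegree < 2*p+1 := by
    have hle : P.natDegree ≤ 2*p := by
      refine Polynomial.natDegree_sum_le_of_forall_le _ _ fun m hm => ?_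
      calc (Polynomial.C (a m) * Polynomial.X^m).natDegree
          ≤ (Polynomial.C (a m)).natDegree + ((Polynomial.X : Polynomial ℝ)^m).natDegree :=
            Polynomial.natDegree_mul_le
        _ ≤ m := by simp
        _ ≤ 2*p := Nat.lt_succ_iff.mp (Finset.mem_range.mp hm)
    omega
  have hPeval : ∀ s : ℝ, P.eval s
      = ∫ x in T, (MvPolynomial.eval (fun i => x₀ i + s * (x i - x₀ i)) v)^2 := by
    intro s
    have hint : ∀ m ∈ Finset.range (2*p+1), IntegrableOn
        (fun x : EuclideanSpace ℝ (Fin d) =>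
          MvPolynomial.eval (fun i => x i) (U.coeff m) * s^m) T := by
      intro m _
      exact (((contEvalAux d (U.coeff m)).mul continuous_const).continuousOn).integrableOn_compact
        hTc
    calc P.eval s = ∑ m ∈ Finset.range (2*p+1), a m * s^m := by
          rw [hPdef]; simp [Polynomial.eval_finset_sum]
      _ = ∑ m ∈ Finset.range (2*p+1), ∫ x in T,
            MvPolynomial.eval (fun i => x i) (U.coeff m) * s^m := by
          refine Finset.sum_congr rfl fun m _ => ?_
          rw [hadef, ← integral_mul_const]
      _ = ∫ x in T, ∑ m ∈ Finset.range (2*p+1),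
            MvPolynomial.eval (fun i => x i) (U.coeff m) * s^m :=
          (integral_finset_sum _ hint).symm
      _ = _ := integral_congr_ae (Filter.EventuallyEq.of_eq (funext fun x => (hpt x s).symm))
  have himg_compact : ∀ s : ℝ, IsCompact ((fun x => x₀ + s • (x - x₀)) '' T) := by
    intro s
    exact hTc.image (continuous_const.add ((continuous_id.sub continuous_const).const_smul s))
  have hCoV : ∀ s : ℝ, 0 < s →
      (∫ y in (fun x => x₀ + s • (x - x₀)) '' T, (MvPolynomial.eval (fun i => y i) v)^2)
        = s^d * P.eval s := by
    intro s hs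
    rw [cov_homothety d x₀ s hs T hTm, hPeval s, ← integral_const_mul]
    refine integral_congr_ae (Filter.EventuallyEq.of_eq (funext fun x => ?_))
    have hfun : (fun i => (x₀ + s • (x - x₀)) i) = fun i : Fin d => x₀ i + s * (x i - x₀ i) := by
      funext i
      simp [PiLp.add_apply, PiLp.smul_apply, PiLp.sub_apply, smul_eq_mul]
    rw [hfun]
  have himg_subset : ∀ s u : ℝ, 0 ≤ s → s ≤ u → 0 < u →
      (fun x => x₀ + s • (x - x₀)) '' T ⊆ (fun x => x₀ + u • (x - x₀)) '' T := by
    intro s u hs hsu hu y hy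
    obtain ⟨x, hxT, rfl⟩ := hy
    refine ⟨x₀ + (s/u) • (x - x₀), ?_, ?_⟩
    · have h1 : x₀ + (s/u) • (x - x₀) = (1 - s/u) • x₀ + (s/u) • x := by
        rw [smul_sub, sub_smul, one_smul]
        abel
      rw [h1]
      exact hTconv hx₀T hxT (by rw [sub_nonneg]; exact (div_le_one hu).mpr hsu)
        (by positivity) (by ring)
    · show x₀ + u • (x₀ + (s/u) • (x - x₀) - x₀) = x₀ + s • (x - x₀)
      rw [add_sub_cancel_left, smul_smul, mul_div_cancel₀ _ hu.ne']
  have hIntOnLam : IntegrableOn (fun y : EuclideanSpace ℝ (Fin d) =>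
      (MvPolynomial.eval (fun i => y i) v)^2) ((fun x => x₀ + lam • (x - x₀)) '' T) :=
    (((contEvalAux d v).pow 2).continuousOn).integrableOn_compact (himg_compact lam)
  have hPnonneg : ∀ s : ℝ, 0 ≤ P.eval s := by
    intro s; rw [hPeval]
    exact setIntegral_nonneg hTm fun x _ => sq_nonneg _
  have hmono : ∀ i : Fin (2*p+1), (t i)^d * P.eval (t i) ≤ lam^d * P.eval lam := by
    intro i
    rw [← hCoV _ (ht_pos i), ← hCoV lam hlam0]
    exact setIntegral_mono_set hIntOnLam (Filter.Eventually.of_forall fun y => sq_nonneg _)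
      (HasSubset.Subset.eventuallyLE (himg_subset _ _ (ht_pos i).le (ht_le i) hlam0))
  have hnode : ∀ i, P.eval (t i) ≤ 2^d * P.eval lam := by
    intro i
    have h6 : (0:ℝ) < (t i)^d := pow_pos (ht_pos i) d
    have h4 : (t i)^d * P.eval (t i) ≤ (t i)^d * (2^d * P.eval lam) := by
      calc (t i)^d * P.eval (t i) ≤ lam^d * P.eval lam := hmono i
        _ ≤ (2 * t i)^d * P.eval lam := by
            refine mul_le_mul_of_nonneg_right ?_ (hPnonneg lam)
            have hgi := ht_ge i
            exact pow_le_pow_left₀ hlam0.le (by linarith) d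
        _ = (t i)^d * (2^d * P.eval lam) := by rw [mul_pow]; ring
    exact (mul_le_mul_iff_right₀ h6).mp h4
  have hM : (0:ℝ) ≤ 2^d * P.eval lam := mul_nonneg (by positivity) (hPnonneg lam)
  have hlag := lagrange_bound t ht_inj P hPdeg (2^d * P.eval lam) hM
    (fun i => hPnonneg _) hnode
  have hIT : (∫ x in T, (MvPolynomial.eval (fun i => x i) v)^2) = P.eval 1 := by
    rw [hPeval 1]
    refine integral_congr_ae (Filter.EventuallyEq.of_eq (funext fun x => ?_))
    have hfun : (fun i : Fin d => x₀ i + 1 * (x i - x₀ i)) = fun i => x i := by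
      funext i; ring
    rw [hfun]
  have hI' : (∫ x in (fun x => x₀ + lam • (x - x₀)) '' T,
      (MvPolynomial.eval (fun i => x i) v)^2) = lam^d * P.eval lam := hCoV lam hlam0
  have hItotal : (∫ x in T, (MvPolynomial.eval (fun i => x i) v)^2)
      ≤ ((2^d * B)/lam^d) * ∫ x in (fun x => x₀ + lam • (x - x₀)) '' T,
          (MvPolynomial.eval (fun i => x i) v)^2 := by
    rw [hIT, hI']
    have heq : ((2^d*B)/lam^d) * (lam^d * P.eval lam) = B * (2^d * P.eval lam) := by
      field_simp
    rw [heq]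
    exact hlag
  have hfin := Real.sqrt_le_sqrt hItotal
  calc Real.sqrt (∫ x in T, (MvPolynomial.eval (fun i => x i) v)^2) ≤
      Real.sqrt (((2^d * B)/lam^d) * ∫ x in (fun x => x₀ + lam • (x - x₀)) '' T,
          (MvPolynomial.eval (fun i => x i) v)^2) := hfin
    _ = Real.sqrt ((2^d * B)/lam^d) * Real.sqrt (∫ x in (fun x => x₀ + lam • (x - x₀)) '' T,
          (MvPolynomial.eval (fun i => x i) v)^2) := Real.sqrt_mul hconst _
    _ ≤ max 1 (Real.sqrt ((2^d * B)/lam^d)) * Real.sqrt (∫ x in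
          (fun x => x₀ + lam • (x - x₀)) '' T,
          (MvPolynomial.eval (fun i => x i) v)^2) :=
        mul_le_mul_of_nonneg_right (le_max_right _ _) (Real.sqrt_nonneg _)
end

section
/- For the one-dimensional case of the homothety lemma: if T ⊂ ℝ is a compact interval, λ ∈ (0,1), and T' = λ(T − x₀) + x₀ ⊆ T is a homothetic copy of T, then for every polynomial v of degree at most p, ‖v‖_{L²(T)} ≤ C(λ,p)·‖v‖_{L²(T')} with C depending only on λ and p. -/
open MeasureTheory

/-- One-dimensional case of the homothety lemma: if `T = [a,b]` is a nondegenerate compact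
interval, `λ ∈ (0,1)`, `x₀ ∈ T`, and `T' = λ(T − x₀) + x₀ ⊆ T` is the homothetic copy
of `T`, then for every polynomial `v` of degree at most `p`,
`‖v‖_{L²(T)} ≤ C(λ,p) ‖v‖_{L²(T')}`. -/
theorem l2_norm_equivalence_homothety_dim_one (p : ℕ) (lam : ℝ)
    (hlam : lam ∈ Set.Ioo (0:ℝ) 1) :
    ∃ C > 0, ∀ (a b x₀ : ℝ), a < b → x₀ ∈ Set.Icc a b →
      (fun x => lam * (x - x₀) + x₀) '' Set.Icc a b ⊆ Set.Icc a b →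
      ∀ v : Polynomial ℝ, v.natDegree ≤ p →
        Real.sqrt (∫ x in Set.Icc a b, (v.eval x) ^ 2) ≤
          C * Real.sqrt (∫ x in (fun x => lam * (x - x₀) + x₀) '' Set.Icc a b,
            (v.eval x) ^ 2) := by
  obtain ⟨hlam0, hlam1⟩ := hlam
  set K : ℝ := ((2*p+1)/lam)^p with hK
  have hKpos : 0 < K := by positivity
  set C : ℝ := ((p:ℝ)+1) * K * Real.sqrt ((2*p+1)/lam) with hCdef
  have hCpos : 0 < C := by positivity
  refine ⟨C, hCpos, ?_⟩
  intro a b x₀ hab hx₀ hsub v hv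
  set a' := lam * (a - x₀) + x₀ with ha'
  set b' := lam * (b - x₀) + x₀ with hb'
  have himg : (fun x => lam * (x - x₀) + x₀) '' Set.Icc a b = Set.Icc a' b' := by
    have hfun : (fun x => lam * (x - x₀) + x₀) = (lam * · + (x₀ - lam * x₀)) := by
      funext x; ring
    rw [hfun, Set.image_affine_Icc' hlam0]
    congr 1 <;> ring
  have hsub' : Set.Icc a' b' ⊆ Set.Icc a b := himg ▸ hsub
  set c : ℝ := lam * (b - a) / (2*p+1) with hc
  have hcpos : 0 < c := by
    apply div_pos (by nlinarith) (by positivity)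
  have hcont : Continuous fun x : ℝ => (v.eval x)^2 := (v.continuous).pow 2
  have hvi : ∀ u w : ℝ, IntegrableOn (fun x => (v.eval x)^2) (Set.Icc u w) volume :=
    fun u w => hcont.integrableOn_Icc
  set I' : ℝ := ∫ x in Set.Icc a' b', (v.eval x)^2 with hI'def
  have hI'0 : 0 ≤ I' := setIntegral_nonneg measurableSet_Icc (fun x _ => sq_nonneg _)
  -- choose well-separated points in T' with small values
  have hcellsub : ∀ i : ℕ, i ≤ p →
      Set.Icc (a' + 2*i*c) (a' + 2*i*c + c) ⊆ Set.Icc a' b' := by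
    intro i hi
    apply Set.Icc_subset_Icc
    · nlinarith [hcpos, (by exact_mod_cast hi : (i:ℝ) ≤ p)]
    · have hb'a' : b' = a' + (2*p+1) * c := by
        rw [ha', hb', hc]; field_simp; ring
      rw [hb'a']
      nlinarith [hcpos, (by exact_mod_cast hi : (i:ℝ) ≤ p)]
  have key : ∀ i : ℕ, ∃ ξ ∈ Set.Icc (a' + 2*i*c) (a' + 2*i*c + c),
      (i ≤ p → (v.eval ξ)^2 * c ≤ I') := by
    intro i
    set u := a' + 2*i*c with hu
    have huw : u ≤ u + c := by linarith
    obtain ⟨ξ, hξmem, hξmin⟩ := isCompact_Icc.exists_isMinOn (Set.nonempty_Icc.mpr huw)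
      (hcont.continuousOn (s := Set.Icc u (u+c)))
    refine ⟨ξ, hξmem, fun hi => ?_⟩
    have h1 : (v.eval ξ)^2 * (volume (Set.Icc u (u+c))).toReal
        ≤ ∫ x in Set.Icc u (u+c), (v.eval x)^2 :=
      setIntegral_ge_of_const_le_real measurableSet_Icc measure_Icc_lt_top.ne
        (fun x hx => hξmin hx) (hvi u (u+c))
    have hvol : (volume (Set.Icc u (u+c))).toReal = c := by
      rw [Real.volume_Icc]
      simp [ENNReal.toReal_ofReal hcpos.le]
    have h2 : ∫ x in Set.Icc u (u+c), (v.eval x)^2 ≤ I' := by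
      apply setIntegral_mono_set (hvi a' b')
      · exact Filter.Eventually.of_forall (fun x => sq_nonneg _)
      · exact Filter.Eventually.of_forall (hcellsub i hi)
    calc (v.eval ξ)^2 * c = (v.eval ξ)^2 * (volume (Set.Icc u (u+c))).toReal := by rw [hvol]
      _ ≤ ∫ x in Set.Icc u (u+c), (v.eval x)^2 := h1
      _ ≤ I' := h2
  choose ξ hξmem hξval using key
  -- separation
  have hsep : ∀ i j : ℕ, i < j → c ≤ ξ j - ξ i := by
    intro i j hij
    have h1 := (hξmem i).1
    have h2 := (hξmem i).2
    have h3 := (hξmem j).1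
    have hji : (i:ℝ) + 1 ≤ j := by exact_mod_cast hij
    nlinarith [hcpos]
  have hsepabs : ∀ i j : ℕ, i ≠ j → c ≤ |ξ i - ξ j| := by
    intro i j hij
    rcases hij.lt_or_gt with h | h
    · rw [abs_sub_comm]
      exact le_trans (hsep i j h) (le_abs_self _)
    · exact le_trans (hsep j i h) (le_abs_self _)
  have hinj : Set.InjOn ξ (Finset.range (p+1) : Finset ℕ) := by
    intro i _ j _ hij
    by_contra hne
    have := hsepabs i j hne
    rw [hij, sub_self, abs_zero] at this
    linarith
  -- ξ i lands in T (for i ≤ p)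
  have hξT : ∀ i : ℕ, i ≤ p → ξ i ∈ Set.Icc a b := by
    intro i hi
    exact hsub' (hcellsub i hi (hξmem i))
  -- Lagrange interpolation
  have hdeg : v.degree < ((Finset.range (p+1)).card : ℕ) := by
    rw [Finset.card_range]
    calc v.degree ≤ (v.natDegree : WithBot ℕ) := Polynomial.degree_le_natDegree
      _ ≤ (p : WithBot ℕ) := by exact_mod_cast hv
      _ < ((p+1 : ℕ) : WithBot ℕ) := by exact_mod_cast Nat.lt_succ_self p
  have heq := Lagrange.eq_interpolate (s := Finset.range (p+1)) (v := ξ) hinj hdeg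
  -- pointwise bound on T
  have hM : 0 ≤ Real.sqrt (I'/c) := Real.sqrt_nonneg _
  have hptwise : ∀ x ∈ Set.Icc a b,
      |v.eval x| ≤ ((p:ℝ)+1) * (Real.sqrt (I'/c) * K) := by
    intro x hx
    have hev : v.eval x = ∑ i ∈ Finset.range (p+1),
        v.eval (ξ i) * (Lagrange.basis (Finset.range (p+1)) ξ i).eval x := by
      conv_lhs => rw [heq]
      simp [Lagrange.interpolate_apply, Polynomial.eval_finset_sum]
    rw [hev]
    calc |∑ i ∈ Finset.range (p+1),
          v.eval (ξ i) * (Lagrange.basis (Finset.range (p+1)) ξ i).eval x|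
        ≤ ∑ i ∈ Finset.range (p+1),
          |v.eval (ξ i) * (Lagrange.basis (Finset.range (p+1)) ξ i).eval x| :=
          Finset.abs_sum_le_sum_abs _ _
      _ ≤ ∑ _i ∈ Finset.range (p+1), Real.sqrt (I'/c) * K := by
          apply Finset.sum_le_sum
          intro i hi
          have hip : i ≤ p := Nat.lt_succ_iff.mp (Finset.mem_range.mp hi)
          rw [abs_mul]
          apply mul_le_mul
          · -- |v.eval (ξ i)| ≤ sqrt (I'/c)
            have hb := hξval i hip
            have : (v.eval (ξ i))^2 ≤ I'/c := by
              rw [le_div_iff₀ hcpos]; exact hb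
            calc |v.eval (ξ i)| = Real.sqrt ((v.eval (ξ i))^2) :=
                  (Real.sqrt_sq_eq_abs _).symm
              _ ≤ Real.sqrt (I'/c) := Real.sqrt_le_sqrt this
          · -- |basis eval| ≤ K
            rw [Lagrange.basis, Polynomial.eval_prod, Finset.abs_prod]
            have hcard : ((Finset.range (p+1)).erase i).card = p := by
              rw [Finset.card_erase_of_mem hi, Finset.card_range]
              omega
            calc ∏ j ∈ (Finset.range (p+1)).erase i,
                  |(Lagrange.basisDivisor (ξ i) (ξ j)).eval x|
                ≤ ∏ _j ∈ (Finset.range (p+1)).erase i, (2*p+1)/lam := by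
                  apply Finset.prod_le_prod (fun _ _ => abs_nonneg _)
                  intro j hj
                  obtain ⟨hji, hjr⟩ := Finset.mem_erase.mp hj
                  have hjp : j ≤ p := Nat.lt_succ_iff.mp (Finset.mem_range.mp hjr)
                  have hξj := hξT j hjp
                  simp only [Lagrange.basisDivisor, Polynomial.eval_mul, Polynomial.eval_C,
                    Polynomial.eval_sub, Polynomial.eval_X]
                  rw [abs_mul, abs_inv]
                  have h1 : c ≤ |ξ i - ξ j| := hsepabs i j (fun h => hji (h ▸ rfl))
                  have h2 : |x - ξ j| ≤ b - a := by
                    rw [abs_sub_le_iff]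
                    constructor <;> [linarith [hx.2, hξj.1]; linarith [hx.1, hξj.2]]
                  have h3 : (b-a)/c = (2*p+1)/lam := by
                    have hbne : b - a ≠ 0 := sub_ne_zero.mpr hab.ne'
                    have hpne : (2*(p:ℝ)+1) ≠ 0 := by positivity
                    rw [hc]; field_simp
                  calc |ξ i - ξ j|⁻¹ * |x - ξ j| ≤ c⁻¹ * (b - a) := by
                        apply mul_le_mul
                        · exact inv_anti₀ hcpos h1
                        · exact h2
                        · exact abs_nonneg _
                        · positivity
                    _ = (b-a)/c := by ring
                    _ = (2*p+1)/lam := h3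
              _ = K := by rw [Finset.prod_const, hcard, hK]
          · exact abs_nonneg _
          · exact hM
      _ = ((p:ℝ)+1) * (Real.sqrt (I'/c) * K) := by
          rw [Finset.sum_const, Finset.card_range]
          push_cast; ring
  -- integrate the pointwise bound
  set D : ℝ := (((p:ℝ)+1) * (Real.sqrt (I'/c) * K))^2 with hD
  have hint_le : ∫ x in Set.Icc a b, (v.eval x)^2 ≤ D * (b - a) := by
    have h1 : ∫ x in Set.Icc a b, (v.eval x)^2 ≤ ∫ _x in Set.Icc a b, D := by
      apply setIntegral_mono_on (hvi a b)
        ((integrableOn_const_iff (by finiteness)).mpr (Or.inr measure_Icc_lt_top)) measurableSet_Icc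
      intro x hx
      have := hptwise x hx
      calc (v.eval x)^2 = |v.eval x|^2 := (sq_abs _).symm
        _ ≤ (((p:ℝ)+1) * (Real.sqrt (I'/c) * K))^2 := by
            apply pow_le_pow_left₀ (abs_nonneg _) this
    have h2 : ∫ _x in Set.Icc a b, D = D * (b - a) := by
      rw [setIntegral_const, Real.volume_real_Icc_of_le (by linarith : a ≤ b), smul_eq_mul]
      ring
    linarith
  have hDba : D * (b - a) = C^2 * I' := by
    have hs : (Real.sqrt (I'/c))^2 = I'/c := Real.sq_sqrt (by positivity)
    have hs2 : (Real.sqrt ((2*p+1)/lam))^2 = (2*p+1)/lam :=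
      Real.sq_sqrt (by positivity)
    have h3 : (b-a)/c = (2*p+1)/lam := by
      have hbne : b - a ≠ 0 := sub_ne_zero.mpr hab.ne'
      have hpne : (2*(p:ℝ)+1) ≠ 0 := by positivity
      rw [hc]; field_simp
    have hba : b - a = (2*p+1)/lam * c := by
      rw [eq_comm, ← h3]; field_simp
    rw [hD, hCdef]
    rw [mul_pow, mul_pow, hs, mul_pow, mul_pow, hs2, hba]
    field_simp
  calc Real.sqrt (∫ x in Set.Icc a b, (v.eval x)^2)
      ≤ Real.sqrt (C^2 * I') := Real.sqrt_le_sqrt (by rw [← hDba]; exact hint_le)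
    _ = C * Real.sqrt I' := by
        rw [Real.sqrt_mul (sq_nonneg C), Real.sqrt_sq hCpos.le]
    _ = C * Real.sqrt (∫ x in (fun x => lam * (x - x₀) + x₀) '' Set.Icc a b,
          (v.eval x)^2) := by rw [himg]
end

section
/- For every d ≥ 1 there exists a constant λ_d ∈ (0,1) such that every compact convex body T ⊂ ℝ^d is sandwiched between a homothetic pair of rectangular boxes: there exist boxes B₁ ⊇ T ⊇ B₂ with B₂ a homothetic image of B₁ with scaling factor at least λ_d. -/
open MeasureTheory

/-- A box (rectangular parallelepiped) in `ℝ^d`: the image of the unit cube under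
`t ↦ c + ∑ i, t i • w i` for `d` mutually orthogonal nonzero vectors `w i`. -/
def IsBox {d : ℕ} (B : Set (EuclideanSpace ℝ (Fin d))) : Prop :=
  ∃ (c : EuclideanSpace ℝ (Fin d)) (w : Fin d → EuclideanSpace ℝ (Fin d)),
    (∀ i, w i ≠ 0) ∧ (∀ i j, i ≠ j → (inner ℝ (w i) (w j) : ℝ) = 0) ∧
    B = {x | ∃ t : Fin d → ℝ, (∀ i, t i ∈ Set.Icc (0:ℝ) 1) ∧ x = c + ∑ i, t i • w i}

open RealInnerProductSpace

/-- Auxiliary box with a given corner and generating vectors. -/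
def auxBox {E : Type*} [AddCommGroup E] [Module ℝ E] {n : ℕ} (c : E) (w : Fin n → E) :
    Set E := {x | ∃ t : Fin n → ℝ, (∀ i, t i ∈ Set.Icc (0:ℝ) 1) ∧ x = c + ∑ i, t i • w i}

lemma aux_inner_nonneg {E : Type*} [NormedAddCommGroup E] [InnerProductSpace ℝ E]
    {p q x : E} (h : dist x q ≤ dist p q) : 0 ≤ ⟪x - p, q - p⟫ := by
  have h1 : x - p - (q - p) = x - q := by abel
  have h2 : ‖x - q‖ ≤ ‖q - p‖ := by
    simp only [dist_eq_norm] at h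
    calc ‖x - q‖ ≤ ‖p - q‖ := h
    _ = ‖q - p‖ := norm_sub_rev _ _
  have h3 := norm_sub_sq_real (x - p) (q - p)
  rw [h1] at h3
  nlinarith [norm_nonneg (x - p), norm_nonneg (x - q), norm_nonneg (q - p), sq_nonneg ‖x - p‖]

lemma auxBox_image {E : Type*} [AddCommGroup E] [Module ℝ E] {n : ℕ} (c x₀ : E) (lam : ℝ)
    (w : Fin n → E) :
    (fun x => x₀ + lam • (x - x₀)) '' auxBox c w
      = auxBox (x₀ + lam • (c - x₀)) (fun i => lam • w i) := by
  have key : ∀ t : Fin n → ℝ, ∑ i, t i • (lam • w i) = lam • ∑ i, t i • w i := by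
    intro t
    rw [Finset.smul_sum]
    exact Finset.sum_congr rfl fun i _ => smul_comm _ _ _
  ext y
  constructor
  · rintro ⟨z, ⟨t, ht, rfl⟩, rfl⟩
    refine ⟨t, ht, ?_⟩
    rw [key]
    module
  · rintro ⟨t, ht, rfl⟩
    refine ⟨c + ∑ i, t i • w i, ⟨t, ht, rfl⟩, ?_⟩
    rw [key]
    module

set_option maxHeartbeats 1600000 in
theorem sandwich : ∀ (k : ℕ) (E : Type) [NormedAddCommGroup E] [InnerProductSpace ℝ E]
    [FiniteDimensional ℝ E], Module.finrank ℝ E = k →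
    ∀ T : Set E, IsCompact T → Convex ℝ T → (interior T).Nonempty →
    ∃ (u : Fin k → E) (s : Fin k → ℝ) (c₁ c₂ : E) (lam : ℝ),
      Orthonormal ℝ u ∧ (∀ i, 0 < s i) ∧ ((8:ℝ)⁻¹)^k ≤ lam ∧ lam ≤ 1 ∧
      (∃ x₀ : E, c₂ = x₀ + lam • (c₁ - x₀)) ∧
      T ⊆ auxBox c₁ (fun i => s i • u i) ∧ auxBox c₂ (fun i => (lam * s i) • u i) ⊆ T := by
  intro k
  induction k with
  | zero =>
    intro E _ _ _ hrank T hTcomp hTconv hTint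
    obtain ⟨a₀, ha₀⟩ := hTint
    have ha₀T : a₀ ∈ T := interior_subset ha₀
    have hsub : Subsingleton E := Module.finrank_zero_iff.mp hrank
    refine ⟨fun i => i.elim0, fun i => i.elim0, a₀, a₀, 1, ⟨fun i => i.elim0, fun {i j} _ => i.elim0⟩,
      fun i => i.elim0, by norm_num, le_refl 1, ⟨a₀, by simp⟩, ?_, ?_⟩
    · intro x _
      exact ⟨fun i => i.elim0, fun i => i.elim0, Subsingleton.elim _ _⟩
    · rintro x ⟨t, ht, rfl⟩
      have : a₀ + ∑ i, t i • (((1:ℝ) * i.elim0) • i.elim0) = a₀ := Subsingleton.elim _ _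
      rw [this]
      exact ha₀T
  | succ k ih =>
    intro E _ _ _ hrank T hTcomp hTconv hTint
    obtain ⟨a₀, ha₀⟩ := hTint
    have ha₀T : a₀ ∈ T := interior_subset ha₀
    obtain ⟨r, hr, hball⟩ := Metric.mem_nhds_iff.mp (mem_interior_iff_mem_nhds.mp ha₀)
    -- a pair of points realizing the diameter
    obtain ⟨⟨p, q⟩, hpqT, hmax⟩ :=
      (hTcomp.prod hTcomp).exists_isMaxOn ⟨(a₀, a₀), Set.mk_mem_prod ha₀T ha₀T⟩
        continuous_dist.continuousOn
    have hpT : p ∈ T := hpqT.1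
    have hqT : q ∈ T := hpqT.2
    have hdist : ∀ x ∈ T, ∀ y ∈ T, dist x y ≤ dist p q := fun x hx y hy =>
      hmax (Set.mk_mem_prod hx hy)
    -- the diameter is positive
    have hNT : Nontrivial E := by
      have : 0 < Module.finrank ℝ E := by omega
      exact Module.nontrivial_of_finrank_pos this
    obtain ⟨e, he⟩ := exists_ne (0 : E)
    have hD0 : 0 < dist p q := by
      have hyball : a₀ + (r/2) • ‖e‖⁻¹ • e ∈ Metric.ball a₀ r := by
        have hne : ‖e‖ ≠ 0 := norm_ne_zero_iff.mpr he
        simp only [Metric.mem_ball, dist_eq_norm, add_sub_cancel_left, norm_smul, norm_inv,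
          norm_norm, Real.norm_eq_abs, abs_norm]
        rw [inv_mul_cancel₀ hne]
        rw [abs_of_pos (by linarith)]
        linarith
      have hyT : a₀ + (r/2) • ‖e‖⁻¹ • e ∈ T := hball hyball
      have h1 : dist (a₀ + (r/2) • ‖e‖⁻¹ • e) a₀ = r/2 := by
        have hne : ‖e‖ ≠ 0 := norm_ne_zero_iff.mpr he
        simp only [dist_eq_norm, add_sub_cancel_left, norm_smul, norm_inv, norm_norm,
          Real.norm_eq_abs, abs_norm]
        rw [inv_mul_cancel₀ hne, abs_of_pos (by linarith)]
        ring
      have := hdist _ hyT _ ha₀T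
      rw [h1] at this
      linarith
    set D : ℝ := ‖q - p‖ with hDdef
    have hD : 0 < D := by
      rw [hDdef, ← dist_eq_norm, dist_comm]
      exact hD0
    have hDpq : dist p q = D := by rw [dist_comm, dist_eq_norm]
    have hvne : q - p ≠ 0 := by
      intro h
      rw [hDdef, h, norm_zero] at hD
      exact lt_irrefl 0 hD
    set u : E := D⁻¹ • (q - p) with hudef
    have hu : ‖u‖ = 1 := by
      rw [hudef, norm_smul, norm_inv, Real.norm_eq_abs, abs_of_pos hD, ← hDdef,
        inv_mul_cancel₀ hD.ne']
    -- slab bounds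
    have slab : ∀ x ∈ T, ⟪u, x - p⟫ ∈ Set.Icc (0:ℝ) D := by
      intro x hx
      have h1 : 0 ≤ ⟪x - p, q - p⟫ := aux_inner_nonneg (hdist x hx q hqT)
      have h2 : 0 ≤ ⟪x - q, p - q⟫ := by
        apply aux_inner_nonneg
        rw [dist_comm q p]
        exact hdist x hx p hpT
      have h3 : ⟪x - q, p - q⟫ = ⟪q - x, q - p⟫ := by
        rw [show x - q = -(q - x) by abel, show p - q = -(q - p) by abel, inner_neg_neg]
      have h4 : ⟪x - p, q - p⟫ + ⟪q - x, q - p⟫ = D^2 := by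
        rw [← inner_add_left, show x - p + (q - x) = q - p by abel,
          real_inner_self_eq_norm_sq, hDdef]
      have h5 : ⟪u, x - p⟫ = D⁻¹ * ⟪x - p, q - p⟫ := by
        rw [hudef, real_inner_smul_left, real_inner_comm]
      constructor
      · rw [h5]
        positivity
      · rw [h5]
        rw [inv_mul_le_iff₀ hD]
        nlinarith
    -- orthogonal complement and projection
    set K : Submodule ℝ E := (Submodule.span ℝ {q - p})ᗮ with hKdef
    set φ : E →L[ℝ] E := ContinuousLinearMap.id ℝ E - (innerSL ℝ u).smulRight u with hφdef
    have hφapp : ∀ x : E, φ x = x - ⟪u, x⟫ • u := by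
      intro x
      simp [hφdef]
    have hvu : ⟪q - p, u⟫ = D := by
      rw [hudef, real_inner_smul_right, real_inner_self_eq_norm_sq, ← hDdef]
      field_simp
    have huinner : ∀ x : E, ⟪u, x⟫ = D⁻¹ * ⟪q - p, x⟫ := by
      intro x
      rw [hudef, real_inner_smul_left]
    have hφmem : ∀ x : E, φ x ∈ K := by
      intro x
      rw [hKdef, Submodule.mem_orthogonal_singleton_iff_inner_right, hφapp,
        inner_sub_right, real_inner_smul_right, hvu, huinner]
      field_simp
      ring
    have hφfix : ∀ y : K, φ (y : E) = (y : E) := by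
      intro y
      have h0 : ⟪q - p, (y : E)⟫ = 0 :=
        Submodule.mem_orthogonal_singleton_iff_inner_right.mp y.2
      rw [hφapp, huinner, h0]
      simp
    set P : E →L[ℝ] K := φ.codRestrict K hφmem with hPdef
    have hPapp : ∀ x : E, (P x : E) = φ x := fun x => rfl
    set T' : Set K := ⇑P '' T with hT'def
    have hT'comp : IsCompact T' := hTcomp.image P.continuous
    have hT'conv : Convex ℝ T' := by
      have := hTconv.linear_image (P : E →ₗ[ℝ] K)
      simpa using this
    have hT'int : (interior T').Nonempty := by
      refine ⟨P a₀, mem_interior.mpr ⟨Metric.ball (P a₀) r, ?_, Metric.isOpen_ball,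
        Metric.mem_ball_self hr⟩⟩
      intro y hy
      have hyd : ‖(y : E) - φ a₀‖ < r := by
        have := hy
        rw [Metric.mem_ball, Subtype.dist_eq, dist_eq_norm, hPapp] at this
        exact this
      have hx'T : a₀ + ((y : E) - φ a₀) ∈ T := by
        apply hball
        rw [Metric.mem_ball, dist_eq_norm, add_sub_cancel_left]
        exact hyd
      refine ⟨a₀ + ((y : E) - φ a₀), hx'T, ?_⟩
      apply Subtype.ext
      rw [hPapp, map_add]
      have hmem : (y : E) - φ a₀ ∈ K := K.sub_mem y.2 (hφmem a₀)
      have := hφfix ⟨(y : E) - φ a₀, hmem⟩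
      simp only [Submodule.coe_mk] at this
      rw [this]
      abel
    have hKrank : Module.finrank ℝ K = k := by
      have h1 := Submodule.finrank_add_finrank_orthogonal (Submodule.span ℝ {q - p})
      rw [finrank_span_singleton hvne, hrank, ← hKdef] at h1
      omega
    obtain ⟨u', s', c₁', c₂', lam', hon', hs', hlam'lb, hlam'ub, hcen', hout', hin'⟩ :=
      ih K hKrank T' hT'comp hT'conv hT'int
    have hlam'pos : 0 < lam' := lt_of_lt_of_le (by positivity) hlam'lb
    set lam : ℝ := lam' / 8 with hlamdef
    have hlampos : 0 < lam := by rw [hlamdef]; positivity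
    have hlamle : lam ≤ 8⁻¹ := by rw [hlamdef]; linarith
    have hlamlt1 : lam < 1 := by linarith
    have hdec : ∀ x : E, x = φ x + ⟪u, x⟫ • u := by
      intro x
      rw [hφapp]
      abel
    -- the center of the inner box of the projection, lifted to T
    set cstar : K := c₂' + ∑ i, (1/2 : ℝ) • ((lam' * s' i) • u' i) with hcstardef
    have hcsT' : cstar ∈ T' := hin' ⟨fun _ => (1/2 : ℝ), fun i => by norm_num, rfl⟩
    obtain ⟨xs, hxsT, hPxs⟩ := hcsT'
    set hsx : ℝ := ⟪u, xs⟫ with hhsxdef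
    have hxs_dec : xs = (cstar : E) + hsx • u := by
      have h := hdec xs
      have hφxs : φ xs = (cstar : E) := by rw [← hPapp, hPxs]
      rw [hφxs] at h
      exact h
    have hcsE : (cstar : E) = (c₂' : E) + ∑ i, (1/2 : ℝ) • ((lam' * s' i) • (u' i : E)) := by
      rw [hcstardef]
      push_cast [Submodule.coe_sum]
      rfl
    have huu' : ∀ i, ⟪u, (u' i : E)⟫ = 0 := by
      intro i
      have h0 : ⟪q - p, (u' i : E)⟫ = 0 :=
        Submodule.mem_orthogonal_singleton_iff_inner_right.mp (u' i).2
      rw [huinner, h0, mul_zero]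
    refine ⟨Fin.cons u (fun i => (u' i : E)), Fin.cons D s',
      (c₁' : E) + ⟪u, p⟫ • u,
      (3/8 : ℝ) • (cstar : E) + (1/8 : ℝ) • (c₂' : E) + (1/2 : ℝ) • (φ p)
        + ((3/8) * hsx + (5/8) * ⟪u, p⟫ + D/8) • u,
      lam, ?_, ?_, ?_, ?_, ?_, ?_, ?_⟩
    · -- orthonormality
      rw [orthonormal_iff_ite]
      intro i j
      refine Fin.cases ?_ (fun i' => ?_) i
      · refine Fin.cases ?_ (fun j' => ?_) j
        · simp [real_inner_self_eq_norm_sq, hu]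
        · simp [Fin.cons_zero, Fin.cons_succ, huu' j', (Fin.succ_ne_zero j').symm]
      · refine Fin.cases ?_ (fun j' => ?_) j
        · rw [Fin.cons_succ, Fin.cons_zero, real_inner_comm]
          simp [huu' i', Fin.succ_ne_zero i']
        · rw [Fin.cons_succ, Fin.cons_succ, ← Submodule.coe_inner]
          rw [orthonormal_iff_ite.mp hon' i' j']
          simp [Fin.succ_inj]
    · -- positivity of side lengths
      intro i
      refine Fin.cases ?_ (fun i' => ?_) i
      · simpa using hD
      · simpa using hs' i'
    · -- lower bound on lam
      rw [pow_succ, hlamdef]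
      nlinarith [hlam'lb, pow_pos (show (0:ℝ) < 8⁻¹ by norm_num) k]
    · -- lam ≤ 1
      linarith
    · -- homothety center
      refine ⟨(1 - lam)⁻¹ • ((((3/8 : ℝ) • (cstar : E) + (1/8 : ℝ) • (c₂' : E) + (1/2 : ℝ) • (φ p)
        + ((3/8) * hsx + (5/8) * ⟪u, p⟫ + D/8) • u)) - lam • ((c₁' : E) + ⟪u, p⟫ • u)), ?_⟩
      have hne : (1 : ℝ) - lam ≠ 0 := by linarith
      generalize ((3/8 : ℝ) • (cstar : E) + (1/8 : ℝ) • (c₂' : E) + (1/2 : ℝ) • (φ p)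
        + ((3/8) * hsx + (5/8) * ⟪u, p⟫ + D/8) • u) = A
      generalize ((c₁' : E) + ⟪u, p⟫ • u) = B
      have h1 : (1 - lam) • ((1 - lam)⁻¹ • (A - lam • B)) = A - lam • B := smul_inv_smul₀ hne _
      calc A = (A - lam • B) + lam • B := by abel
      _ = (1 - lam) • ((1 - lam)⁻¹ • (A - lam • B)) + lam • B := by rw [h1]
      _ = (1 - lam)⁻¹ • (A - lam • B) + lam • (B - (1 - lam)⁻¹ • (A - lam • B)) := by module
    · -- outer inclusion
      intro x hx
      obtain ⟨t', ht', hteq⟩ := hout' ⟨x, hx, rfl⟩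
      have hteqE : φ x = (c₁' : E) + ∑ i, t' i • (s' i • (u' i : E)) := by
        have h := congrArg (Subtype.val) hteq
        rw [hPapp x] at h
        push_cast [Submodule.coe_sum] at h
        exact h
      refine ⟨Fin.cons ((⟪u, x⟫ - ⟪u, p⟫)/D) t', ?_, ?_⟩
      · intro i
        refine Fin.cases ?_ (fun i' => ?_) i
        · have hsl := slab x hx
          rw [inner_sub_right] at hsl
          simp only [Fin.cons_zero]
          constructor
          · exact div_nonneg (by linarith [hsl.1]) hD.le
          · rw [div_le_one hD]
            linarith [hsl.2]
        · simpa using ht' i'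
      · rw [Fin.sum_univ_succ]
        simp only [Fin.cons_zero, Fin.cons_succ]
        have hss : ((⟪u, x⟫ - ⟪u, p⟫)/D) • (D • u) = (⟪u, x⟫ - ⟪u, p⟫) • u := by
          rw [smul_smul, div_mul_cancel₀ _ hD.ne']
        rw [hss]
        have hxdec := hdec x
        rw [hteqE] at hxdec
        conv_lhs => rw [hxdec]
        module
    · -- inner inclusion
      rintro y ⟨t, ht, rfl⟩
      set z' : K := c₂' + ∑ i, (t i.succ) • ((lam' * s' i) • u' i) with hz'def
      have hz'T' : z' ∈ T' := hin' ⟨fun i => t i.succ, fun i => ht i.succ, rfl⟩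
      obtain ⟨xz, hxzT, hPxz⟩ := hz'T'
      set hzx : ℝ := ⟪u, xz⟫ with hhzxdef
      have hxz_dec : xz = (z' : E) + hzx • u := by
        have h := hdec xz
        have hφxz : φ xz = (z' : E) := by rw [← hPapp, hPxz]
        rw [hφxz] at h
        exact h
      have hz'E : (z' : E) = (c₂' : E) + ∑ i, (t i.succ) • ((lam' * s' i) • (u' i : E)) := by
        rw [hz'def]
        push_cast [Submodule.coe_sum]
        rfl
      have hhz := slab xz hxzT
      rw [inner_sub_right] at hhz
      have hhs := slab xs hxsT
      rw [inner_sub_right] at hhs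
      set θ : ℝ := (⟪u, p⟫/4 + D/4 + 2 * t 0 * lam * D - hzx/4)/D with hθdef
      have ht0 := ht 0
      have hθ0 : 0 ≤ θ := by
        rw [hθdef]
        apply div_nonneg _ hD.le
        nlinarith [hhz.2, ht0.1, hlampos.le, hD.le,
          mul_nonneg (mul_nonneg ht0.1 hlampos.le) hD.le]
      have hθ1 : θ ≤ 1 := by
        rw [hθdef, div_le_one hD]
        nlinarith [hhz.1, ht0.2, hlamle, hD,
          mul_le_mul ht0.2 hlamle hlampos.le zero_le_one,
          mul_le_mul_of_nonneg_right (mul_le_mul ht0.2 hlamle hlampos.le zero_le_one) hD.le]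
      have hxbT : (1 - θ) • p + θ • q ∈ T := hTconv hpT hqT (by linarith) hθ0 (by ring)
      have hxaT : (3/4 : ℝ) • xs + (1/4 : ℝ) • xz ∈ T :=
        hTconv hxsT hxzT (by norm_num) (by norm_num) (by norm_num)
      have hfin : (1/2 : ℝ) • ((3/4 : ℝ) • xs + (1/4 : ℝ) • xz)
          + (1/2 : ℝ) • ((1 - θ) • p + θ • q) ∈ T :=
        hTconv hxaT hxbT (by norm_num) (by norm_num) (by norm_num)
      have hq : q = p + D • u := by
        rw [hudef, smul_smul, mul_inv_cancel₀ hD.ne', one_smul]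
        abel
      have key : ((3/8 : ℝ) • (cstar : E) + (1/8 : ℝ) • (c₂' : E) + (1/2 : ℝ) • (φ p)
            + ((3/8) * hsx + (5/8) * ⟪u, p⟫ + D/8) • u)
          + ∑ i, t i • ((lam * (Fin.cons D s' : Fin (k+1) → ℝ) i) •
              (Fin.cons u (fun i => (u' i : E)) : Fin (k+1) → E) i)
          = (1/2 : ℝ) • ((3/4 : ℝ) • xs + (1/4 : ℝ) • xz)
            + (1/2 : ℝ) • ((1 - θ) • p + θ • q) := by
        rw [Fin.sum_univ_succ]
        simp only [Fin.cons_zero, Fin.cons_succ]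
        have hS : ∑ i, t i.succ • ((lam * s' i) • (u' i : E))
            = (8:ℝ)⁻¹ • ∑ i, (t i.succ) • ((lam' * s' i) • (u' i : E)) := by
          rw [Finset.smul_sum]
          refine Finset.sum_congr rfl fun i _ => ?_
          rw [smul_smul, smul_smul, smul_smul]
          congr 1
          rw [hlamdef]
          ring
        rw [hS, hcsE, hφapp p, hxs_dec, hxz_dec, hz'E, hcsE, hq, hθdef, hlamdef]
        have hDne : D ≠ 0 := hD.ne'
        match_scalars
        · norm_num
        · norm_num
        · field_simp
          ring
        · field_simp
          ring
        · norm_num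
      rw [key]
      exact hfin

/-- Every convex body in `ℝ^d` is sandwiched between a homothetic pair of boxes
`B₁ ⊇ T ⊇ B₂` with scaling factor bounded below by a constant `λ_d ∈ (0,1)`
depending only on the dimension. -/
theorem convex_body_sandwiched_between_homothetic_boxes (d : ℕ) (hd : 1 ≤ d) :
    ∃ lam_d ∈ Set.Ioo (0:ℝ) 1, ∀ T : Set (EuclideanSpace ℝ (Fin d)),
      IsCompact T → Convex ℝ T → (interior T).Nonempty →
      ∃ (B₁ B₂ : Set (EuclideanSpace ℝ (Fin d))), IsBox B₁ ∧ IsBox B₂ ∧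
        T ⊆ B₁ ∧ B₂ ⊆ T ∧
        ∃ (x₀ : EuclideanSpace ℝ (Fin d)) (lam : ℝ), lam_d ≤ lam ∧ lam ≤ 1 ∧
          B₂ = (fun x => x₀ + lam • (x - x₀)) '' B₁ := by
  refine ⟨((8:ℝ)⁻¹)^d, ⟨by positivity, pow_lt_one₀ (by norm_num) (by norm_num) (by omega)⟩, ?_⟩
  intro T hTc hTconv hTint
  obtain ⟨u, s, c₁, c₂, lam, hon, hs, hlb, hub, ⟨x₀, hx₀⟩, hout, hin⟩ :=
    sandwich d (EuclideanSpace ℝ (Fin d)) finrank_euclideanSpace_fin T hTc hTconv hTint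
  have hlampos : 0 < lam := lt_of_lt_of_le (by positivity) hlb
  have horth : ∀ i j : Fin d, i ≠ j → (inner ℝ (u i) (u j) : ℝ) = 0 := by
    intro i j hij
    rw [orthonormal_iff_ite.mp hon i j, if_neg hij]
  refine ⟨auxBox c₁ (fun i => s i • u i), auxBox c₂ (fun i => (lam * s i) • u i),
    ?_, ?_, hout, hin, x₀, lam, hlb, hub, ?_⟩
  · refine ⟨c₁, fun i => s i • u i, fun i => smul_ne_zero (hs i).ne' (hon.ne_zero i),
      fun i j hij => ?_, rfl⟩
    rw [real_inner_smul_left, real_inner_smul_right, horth i j hij]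
    ring
  · refine ⟨c₂, fun i => (lam * s i) • u i,
      fun i => smul_ne_zero (mul_pos hlampos (hs i)).ne' (hon.ne_zero i), fun i j hij => ?_, rfl⟩
    rw [real_inner_smul_left, real_inner_smul_right, horth i j hij]
    ring
  · rw [auxBox_image, ← hx₀]
    have hfun : (fun i => (lam * s i) • u i) = fun i => lam • (s i • u i) := by
      funext i
      rw [smul_smul]
    rw [hfun]
end

section
/- For every polynomial w of degree at most p on [0,1], the derivative satisfies ‖w'‖_{L²([0,1])} ≤ C·p²·‖w‖_{L²([0,1])} for an absolute constant C independent of p and w. -/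
open MeasureTheory

namespace MarkovAux
open Polynomial Finset MeasureTheory


noncomputable def Leg (n : ℕ) : Polynomial ℝ := derivative^[n] ((X^2 - X)^n)

lemma pint (f : Polynomial ℝ) : IntervalIntegrable (fun x => f.eval x) volume 0 1 :=
  f.continuous.intervalIntegrable _ _

lemma ibp (f g : Polynomial ℝ) :
    ∫ x in (0:ℝ)..1, (derivative f).eval x * g.eval x
      = f.eval 1 * g.eval 1 - f.eval 0 * g.eval 0
        - ∫ x in (0:ℝ)..1, f.eval x * (derivative g).eval x := by
  have h := intervalIntegral.integral_mul_deriv_eq_deriv_mul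
    (u := fun x => g.eval x) (v := fun x => f.eval x)
    (u' := fun x => (derivative g).eval x) (v' := fun x => (derivative f).eval x)
    (fun x _ => g.hasDerivAt x) (fun x _ => f.hasDerivAt x) (pint _) (pint _)
  have c1 : (∫ x in (0:ℝ)..1, g.eval x * (derivative f).eval x)
      = ∫ x in (0:ℝ)..1, (derivative f).eval x * g.eval x := by simp_rw [mul_comm]
  have c2 : (∫ x in (0:ℝ)..1, (derivative g).eval x * f.eval x)
      = ∫ x in (0:ℝ)..1, f.eval x * (derivative g).eval x := by simp_rw [mul_comm]
  rw [c1, c2] at h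
  linarith [h]

lemma ibp_iter : ∀ (n : ℕ) (f g : Polynomial ℝ),
    (∀ j < n, (derivative^[j] f).eval 0 = 0) → (∀ j < n, (derivative^[j] f).eval 1 = 0) →
    ∫ x in (0:ℝ)..1, (derivative^[n] f).eval x * g.eval x
      = (-1)^n * ∫ x in (0:ℝ)..1, f.eval x * (derivative^[n] g).eval x := by
  intro n
  induction n with
  | zero => intro f g _ _; simp
  | succ n ih =>
    intro f g h0 h1
    have key : derivative^[n+1] f = derivative^[n] (derivative f) :=
      Function.iterate_succ_apply derivative n f
    rw [key, ih (derivative f) g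
      (fun j hj => by rw [← Function.iterate_succ_apply]; exact h0 (j+1) (by omega))
      (fun j hj => by rw [← Function.iterate_succ_apply]; exact h1 (j+1) (by omega))]
    have e0 : f.eval 0 = 0 := by simpa using h0 0 (by omega)
    have e1 : f.eval 1 = 0 := by simpa using h1 0 (by omega)
    rw [ibp f (derivative^[n] g), e0, e1,
      ← Function.iterate_succ_apply' derivative n g]
    ring

lemma monicB : (X^2 - X : Polynomial ℝ).Monic :=
  Polynomial.monic_X_pow_sub (by rw [Polynomial.degree_X]; exact_mod_cast Nat.one_lt_two)

lemma degB (n : ℕ) : ((X^2 - X : Polynomial ℝ)^n).natDegree = 2*n := by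
  have h2 : (X^2 - X : Polynomial ℝ).natDegree = 2 := by compute_degree!
  rw [Polynomial.natDegree_pow, h2]; ring

lemma coeffB (n : ℕ) : ((X^2 - X : Polynomial ℝ)^n).coeff (2*n) = 1 := by
  have h := (monicB.pow n).coeff_natDegree
  rwa [degB] at h

lemma D2n (n : ℕ) : derivative^[2*n] ((X^2 - X : Polynomial ℝ)^n) = C (((2*n).factorial : ℕ) : ℝ) := by
  have hdeg : (derivative^[2*n] ((X^2 - X : Polynomial ℝ)^n)).natDegree = 0 := by
    have h := Polynomial.natDegree_iterate_derivative ((X^2 - X : Polynomial ℝ)^n) (2*n)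
    rw [degB] at h; omega
  have := Polynomial.eq_C_of_natDegree_le_zero (le_of_eq hdeg)
  rw [this, Polynomial.coeff_iterate_derivative]
  rw [zero_add, coeffB, Nat.descFactorial_self]; simp

lemma beta : ∀ (b a : ℕ), ∫ x in (0:ℝ)..1, x^a * (1-x)^b
    = (a.factorial * b.factorial : ℝ) / (a+b+1).factorial := by
  intro b
  induction b with
  | zero =>
    intro a
    simp only [pow_zero, mul_one, Nat.factorial_zero, Nat.cast_one, integral_pow]
    rw [Nat.add_zero, Nat.factorial_succ]
    push_cast
    rw [one_pow]
    field_simp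
    simp
  | succ b ih =>
    intro a
    have hu : ∀ x ∈ Set.uIcc (0:ℝ) 1, HasDerivAt (fun x : ℝ => (1-x)^(b+1))
        (((b+1:ℝ) * (1-x)^b) * (-1)) x := by
      intro x _
      exact ((hasDerivAt_pow (b+1) (1-x)).comp x
        ((hasDerivAt_id x).const_sub 1)).congr_deriv (by push_cast; ring)
    have hv : ∀ x ∈ Set.uIcc (0:ℝ) 1, HasDerivAt (fun x : ℝ => x^(a+1)/(a+1)) (x^a) x := by
      intro x _
      have ha : ((a:ℝ)+1) ≠ 0 := by positivity
      exact ((hasDerivAt_pow (a+1) x).div_const _).congr_deriv (by push_cast; field_simp)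
    have hint1 : IntervalIntegrable (fun x : ℝ => ((b+1:ℝ) * (1-x)^b) * (-1)) volume 0 1 :=
      Continuous.intervalIntegrable (by continuity) _ _
    have hint2 : IntervalIntegrable (fun x : ℝ => x^a) volume 0 1 :=
      Continuous.intervalIntegrable (by continuity) _ _
    have h := intervalIntegral.integral_mul_deriv_eq_deriv_mul hu hv hint1 hint2
    have hre : ∀ x : ℝ, ((b+1:ℝ) * (1-x)^b) * (-1) * (x^(a+1)/(a+1))
        = (-((b+1:ℝ)/(a+1))) * (x^(a+1) * (1-x)^b) := by intro x; push_cast; ring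
    simp_rw [hre] at h
    rw [intervalIntegral.integral_const_mul] at h
    norm_num at h
    have goal_comm : (∫ x in (0:ℝ)..1, x^a * (1-x)^(b+1))
        = ∫ x in (0:ℝ)..1, (1-x)^(b+1) * x^a := by simp_rw [mul_comm]
    rw [goal_comm, h, ih (a+1)]
    have h1 : ((a+1+b+1).factorial : ℝ) ≠ 0 := by positivity
    have h2 : ((a+(b+1)+1).factorial : ℝ) ≠ 0 := by positivity
    have h3 : ((a:ℝ)+1) ≠ 0 := by positivity
    have he : a+1+b+1 = a+(b+1)+1 := by omega
    rw [he] at *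
    rw [Nat.factorial_succ (a), Nat.factorial_succ (b)]
    push_cast
    field_simp

lemma vanish0 (n j : ℕ) (hj : j < n) : (derivative^[j] ((X^2 - X : Polynomial ℝ)^n)).eval 0 = 0 := by
  have hd : (X : Polynomial ℝ)^n ∣ (X^2 - X)^n := pow_dvd_pow_of_dvd ⟨X - 1, by ring⟩ n
  obtain ⟨r, hr⟩ := Polynomial.pow_sub_dvd_iterate_derivative_of_pow_dvd j hd
  rw [hr]; simp [zero_pow (by omega : n - j ≠ 0)]

lemma vanish1 (n j : ℕ) (hj : j < n) : (derivative^[j] ((X^2 - X : Polynomial ℝ)^n)).eval 1 = 0 := by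
  have hd : ((X : Polynomial ℝ) - 1)^n ∣ (X^2 - X)^n := pow_dvd_pow_of_dvd ⟨X, by ring⟩ n
  obtain ⟨r, hr⟩ := Polynomial.pow_sub_dvd_iterate_derivative_of_pow_dvd j hd
  rw [hr]; simp [zero_pow (by omega : n - j ≠ 0)]

lemma ortho (n : ℕ) (q : Polynomial ℝ) (hq : q.natDegree < n) :
    ∫ x in (0:ℝ)..1, (Leg n).eval x * q.eval x = 0 := by
  rw [Leg, ibp_iter n _ q (vanish0 n) (vanish1 n),
    Polynomial.iterate_derivative_eq_zero (by simpa using hq)]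
  simp

lemma normL (n : ℕ) : ∫ x in (0:ℝ)..1, (Leg n).eval x ^ 2
    = ((n.factorial : ℝ))^2 / (2*n+1) := by
  have key : ∫ x in (0:ℝ)..1, (Leg n).eval x * (Leg n).eval x
      = (-1)^n * ∫ x in (0:ℝ)..1, ((X^2 - X : Polynomial ℝ)^n).eval x
          * (derivative^[n] (Leg n)).eval x := by
    rw [Leg, ibp_iter n _ _ (vanish0 n) (vanish1 n)]
  have hDD : derivative^[n] (Leg n) = C (((2*n).factorial : ℕ) : ℝ) := by
    rw [Leg, ← Function.iterate_add_apply, ← D2n n]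
    norm_num [two_mul]
  rw [hDD] at key
  have hpt : ∀ x : ℝ, (-1:ℝ)^n * (((X^2 - X : Polynomial ℝ)^n).eval x
      * (C (((2*n).factorial : ℕ) : ℝ)).eval x)
      = ((2*n).factorial : ℝ) * (x^n * (1-x)^n) := by
    intro x
    simp only [Polynomial.eval_pow, Polynomial.eval_sub, Polynomial.eval_X, Polynomial.eval_C,
      Polynomial.eval_mul]
    rw [show (-1:ℝ)^n * ((x^2-x)^n * ((2*n).factorial : ℝ))
      = ((2*n).factorial : ℝ) * (((-1)*(x^2-x))^n) by rw [mul_pow]; ring]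
    rw [← mul_pow]
    congr 1
    ring
  have key2 : ∫ x in (0:ℝ)..1, (Leg n).eval x * (Leg n).eval x
      = ((2*n).factorial : ℝ) * ∫ x in (0:ℝ)..1, x^n * (1-x)^n := by
    rw [key, ← intervalIntegral.integral_const_mul, ← intervalIntegral.integral_const_mul]
    apply intervalIntegral.integral_congr
    intro x _
    exact hpt x
  simp_rw [pow_two]
  rw [key2, beta n n]
  have h21 : (2*n+1).factorial = (2*n+1) * (2*n).factorial := Nat.factorial_succ _
  have hnn : n + n + 1 = 2*n+1 := by ring
  rw [hnn, h21]
  have f1 : ((2*n).factorial : ℝ) ≠ 0 := by positivity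
  have f2 : ((2*n+1 : ℕ) : ℝ) ≠ 0 := by positivity
  push_cast
  field_simp

lemma factoB (n : ℕ) : ((X^2 - X : Polynomial ℝ))^n = X^n * (X - 1)^n := by
  rw [← mul_pow]; congr 1; ring

lemma evalD_Xpow (m k : ℕ) (x : ℝ) :
    (derivative^[k] ((X : Polynomial ℝ)^m)).eval x = (m.descFactorial k : ℝ) * x^(m-k) := by
  rw [Polynomial.iterate_derivative_X_pow_eq_smul]
  simp

lemma evalD_Xsub (m k : ℕ) (x : ℝ) :
    (derivative^[k] (((X : Polynomial ℝ) - 1)^m)).eval x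
      = (m.descFactorial k : ℝ) * (x-1)^(m-k) := by
  have h1 : ((X : Polynomial ℝ) - 1) = X - C 1 := by rw [map_one]
  rw [h1, Polynomial.iterate_derivative_X_sub_pow]
  simp

lemma legExpand (m N x) : (derivative^[N] ((X^2 - X : Polynomial ℝ)^m)).eval x
    = ∑ k ∈ range (N+1), (N.choose k : ℝ)
       * ((m.descFactorial (N-k) : ℝ) * x^(m-(N-k)))
       * ((m.descFactorial k : ℝ) * (x-1)^(m-k)) := by
  rw [factoB, Polynomial.iterate_derivative_mul, Polynomial.eval_finset_sum]
  refine Finset.sum_congr rfl (fun k _ => ?_)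
  simp [evalD_Xpow, evalD_Xsub, mul_assoc]

lemma evalLeg1 (n : ℕ) : (Leg n).eval 1 = (n.factorial : ℝ) := by
  rw [Leg, legExpand]
  rw [Finset.sum_eq_single n]
  · rw [Nat.sub_self]
    simp [Nat.descFactorial_self]
  · intro b hb hbn
    have hb' : b < n := by simp at hb; omega
    simp [zero_pow (by omega : n - b ≠ 0)]
  · intro h; exact absurd (Finset.mem_range.2 (by omega)) h

lemma evalLeg0 (n : ℕ) : (Leg n).eval 0 = (-1)^n * (n.factorial : ℝ) := by
  rw [Leg, legExpand]
  rw [Finset.sum_eq_single 0]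
  · rw [Nat.sub_zero, Nat.sub_self]
    simp [Nat.descFactorial_self]
    ring_nf
  · intro b hb hbn
    have hb' : b < n + 1 := by simpa using hb
    rw [show n - (n - b) = b from by omega]
    simp [zero_pow hbn]
  · intro h; exact absurd (Finset.mem_range.2 (by omega)) h

lemma evalDLeg1 (n : ℕ) : (derivative (Leg n)).eval 1
    = ((n:ℝ)+1) * n * (n.factorial : ℝ) := by
  have h : derivative (Leg n) = derivative^[n+1] ((X^2 - X : Polynomial ℝ)^n) :=
    (Function.iterate_succ_apply' derivative n _).symm
  rw [h, legExpand]
  rw [Finset.sum_eq_single n]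
  · rw [show n + 1 - n = 1 from by omega, Nat.sub_self]
    simp [Nat.descFactorial_self, Nat.descFactorial_one]
  · intro b hb hbn
    have hb' : b < n + 2 := by simp at hb; omega
    rcases lt_or_ge b n with hc | hc
    · simp [zero_pow (by omega : n - b ≠ 0)]
    · have hb2 : b = n + 1 := by omega
      subst hb2
      simp [Nat.descFactorial_eq_zero_iff_lt.2 (by omega : n < n + 1)]
  · intro h; exact absurd (Finset.mem_range.2 (by omega)) h

lemma evalDLeg0 (n : ℕ) : (derivative (Leg (n+1))).eval 0
    = (-1)^n * ((n:ℝ)+2) * ((n:ℝ)+1) * ((n+1).factorial : ℝ) := by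
  have h : derivative (Leg (n+1)) = derivative^[n+2] ((X^2 - X : Polynomial ℝ)^(n+1)) :=
    (Function.iterate_succ_apply' derivative (n+1) _).symm
  rw [h, legExpand]
  rw [Finset.sum_eq_single 1]
  · rw [show n + 2 - 1 = n + 1 from by omega, Nat.sub_self, show n + 1 - 1 = n from by omega,
      Nat.descFactorial_self, Nat.descFactorial_one, Nat.choose_one_right, pow_zero,
      show ((0:ℝ)-1) = -1 by ring]
    push_cast
    ring
  · intro b hb hbn
    have hb' : b < n + 3 := by simp at hb; omega
    match b, hbn with
    | 0, _ =>
      simp [Nat.descFactorial_eq_zero_iff_lt.2 (by omega : n + 1 < n + 2)]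
    | (b'+2), _ =>
      rcases lt_or_ge (b'+2) (n+2) with hc | hc
      · rw [show n + 1 - (n + 2 - (b'+2)) = b' + 1 from by omega]
        simp [zero_pow (by omega : b' + 1 ≠ 0)]
      · have hb2 : b' + 2 = n + 2 := by omega
        rw [hb2]
        simp [Nat.descFactorial_eq_zero_iff_lt.2 (by omega : n + 1 < n + 2)]
  · intro h; exact absurd (Finset.mem_range.2 (by omega)) h

lemma natDegree_Leg_le (n : ℕ) : (Leg n).natDegree ≤ n :=
  (Polynomial.natDegree_iterate_derivative _ _).trans (by rw [degB]; omega)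

lemma coeff_Leg (n : ℕ) : (Leg n).coeff n = ((2*n).descFactorial n : ℝ) := by
  rw [Leg, Polynomial.coeff_iterate_derivative, show n + n = 2*n from by ring, coeffB]
  simp

lemma span : ∀ (p : ℕ) (w : Polynomial ℝ), w.natDegree ≤ p →
    ∃ c : ℕ → ℝ, w = ∑ n ∈ range (p+1), C (c n) * Leg n := by
  intro p
  induction p with
  | zero =>
    intro w hw
    refine ⟨fun _ => w.coeff 0, ?_⟩
    have h0 : Leg 0 = 1 := by simp [Leg]
    rw [Finset.sum_range_one, h0, mul_one]
    exact Polynomial.eq_C_of_natDegree_le_zero hw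
  | succ p ih =>
    intro w hw
    set d : ℝ := ((2*(p+1)).descFactorial (p+1) : ℝ) with hd
    have hdpos : 0 < d := by
      rw [hd]
      have : (2*(p+1)).descFactorial (p+1) ≠ 0 := by
        rw [Ne, Nat.descFactorial_eq_zero_iff_lt]; omega
      exact_mod_cast Nat.pos_of_ne_zero this
    set a : ℝ := w.coeff (p+1) / d with ha
    have hdeg : (w - C a * Leg (p+1)).natDegree ≤ p := by
      apply Polynomial.natDegree_le_iff_coeff_eq_zero.2
      intro N hN
      rw [Polynomial.coeff_sub, Polynomial.coeff_C_mul]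
      rcases eq_or_lt_of_le (show p + 1 ≤ N from hN) with h | h
      · rw [← h, coeff_Leg, ha, ← hd, div_mul_cancel₀ _ hdpos.ne', sub_self]
      · rw [Polynomial.coeff_eq_zero_of_natDegree_lt (lt_of_le_of_lt hw h),
          Polynomial.coeff_eq_zero_of_natDegree_lt (lt_of_le_of_lt (natDegree_Leg_le _) h)]
        ring
    obtain ⟨c, hc⟩ := ih _ hdeg
    refine ⟨Function.update c (p+1) a, ?_⟩
    rw [Finset.sum_range_succ, Function.update_self]
    have hcongr : ∑ n ∈ range (p+1), C (Function.update c (p+1) a n) * Leg n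
        = ∑ n ∈ range (p+1), C (c n) * Leg n := by
      refine Finset.sum_congr rfl (fun n hn => ?_)
      rw [Function.update_of_ne (by simp at hn; omega)]
    rw [hcongr, ← hc]
    ring


lemma ortho' (m n : ℕ) (h : m ≠ n) :
    ∫ x in (0:ℝ)..1, (Leg m).eval x * (Leg n).eval x = 0 := by
  rcases h.lt_or_gt with h | h
  · have h2 := ortho n (Leg m) (lt_of_le_of_lt (natDegree_Leg_le m) h)
    calc ∫ x in (0:ℝ)..1, (Leg m).eval x * (Leg n).eval x
        = ∫ x in (0:ℝ)..1, (Leg n).eval x * (Leg m).eval x := by simp_rw [mul_comm]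
      _ = 0 := h2
  · exact ortho m (Leg n) (lt_of_le_of_lt (natDegree_Leg_le n) h)

lemma integral_sq_nonneg (f : ℝ → ℝ) : 0 ≤ ∫ x in (0:ℝ)..1, (f x)^2 :=
  intervalIntegral.integral_nonneg (by norm_num) (fun x _ => sq_nonneg _)

lemma cs (f g : Polynomial ℝ) :
    (∫ x in (0:ℝ)..1, f.eval x * g.eval x)^2
      ≤ (∫ x in (0:ℝ)..1, f.eval x^2) * (∫ x in (0:ℝ)..1, g.eval x^2) := by
  set A := ∫ x in (0:ℝ)..1, f.eval x^2 with hA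
  set B := ∫ x in (0:ℝ)..1, f.eval x * g.eval x with hB
  set Cq := ∫ x in (0:ℝ)..1, g.eval x^2 with hC
  have hAnn : 0 ≤ A := integral_sq_nonneg _
  have hCnn : 0 ≤ Cq := integral_sq_nonneg _
  have q : ∀ t : ℝ, 0 ≤ A + 2*t*B + t^2*Cq := by
    intro t
    have h1 : (fun x : ℝ => (f.eval x + t * g.eval x)^2)
        = fun x => f.eval x^2 + ((2*t) * (f.eval x * g.eval x) + t^2 * (g.eval x^2)) := by
      funext x; ring
    have h2 : (0:ℝ) ≤ ∫ x in (0:ℝ)..1, (f.eval x + t * g.eval x)^2 :=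
      intervalIntegral.integral_nonneg (by norm_num) (fun x _ => sq_nonneg _)
    rw [h1] at h2
    rw [intervalIntegral.integral_add (f := fun x => f.eval x^2)
          (g := fun x => (2*t) * (f.eval x * g.eval x) + t^2 * (g.eval x^2)) ((f.continuous.pow 2).intervalIntegrable _ _)
        ((((continuous_const.mul (f.continuous.mul g.continuous))).add
          (continuous_const.mul (g.continuous.pow 2))).intervalIntegrable _ _),
      intervalIntegral.integral_add (f := fun x => (2*t) * (f.eval x * g.eval x))
          (g := fun x => t^2 * (g.eval x^2))
        ((continuous_const.mul (f.continuous.mul g.continuous)).intervalIntegrable _ _)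
        ((continuous_const.mul (g.continuous.pow 2)).intervalIntegrable _ _),
      intervalIntegral.integral_const_mul, intervalIntegral.integral_const_mul] at h2
    calc (0:ℝ) ≤ _ := h2
    _ = A + 2*t*B + t^2*Cq := by
      simp only [← hA, ← hB, ← hC]
      push_cast
      ring_nf
  rcases hCnn.eq_or_lt with h0 | hpos
  · have hC0 : Cq = 0 := h0.symm
    have hB0 : B = 0 := by
      by_contra hBne
      have h2 := q (-(A+1)/(2*B))
      rw [hC0, mul_zero] at h2
      have h3 : 2 * (-(A+1)/(2*B)) * B = -(A+1) := by field_simp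
      rw [h3] at h2
      linarith
    rw [hB0, hC0]
    nlinarith
  · have h2 := q (-B/Cq)
    have h3 : Cq * (A + 2*(-B/Cq)*B + (-B/Cq)^2*Cq) = A*Cq - B^2 := by
      field_simp; ring
    nlinarith [mul_nonneg hpos.le h2]

lemma dnorm (n : ℕ) : ∫ x in (0:ℝ)..1, (derivative (Leg (n+1))).eval x ^ 2
    = 2*((n:ℝ)+1)*((n:ℝ)+2)*(((n+1).factorial : ℝ))^2 := by
  have horth : (∫ x in (0:ℝ)..1, (Leg (n+1)).eval x
      * (derivative (derivative (Leg (n+1)))).eval x) = 0 := by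
    apply ortho (n+1)
    have l1 := Polynomial.natDegree_derivative_le (derivative (Leg (n+1)))
    have l2 := Polynomial.natDegree_derivative_le (Leg (n+1))
    have l3 := natDegree_Leg_le (n+1)
    omega
  have key : ∫ x in (0:ℝ)..1, (derivative (Leg (n+1))).eval x
      * (derivative (Leg (n+1))).eval x
      = (Leg (n+1)).eval 1 * (derivative (Leg (n+1))).eval 1
        - (Leg (n+1)).eval 0 * (derivative (Leg (n+1))).eval 0 := by
    rw [ibp (Leg (n+1)) (derivative (Leg (n+1))), horth]
    ring
  simp_rw [pow_two]
  rw [key, evalLeg1, evalLeg0, evalDLeg1, evalDLeg0]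
  have hs2 : ((-1:ℝ))^(n+1) * (-1)^n = -1 := by
    rw [← pow_add]
    exact Odd.neg_one_pow ⟨n, by ring⟩
  push_cast
  linear_combination (-(((n:ℝ)+2) * ((n:ℝ)+1) * ((n+1).factorial : ℝ)^2)) * hs2

lemma expand (p : ℕ) (c : ℕ → ℝ) (F : ℕ → Polynomial ℝ) :
    ∫ x in (0:ℝ)..1, (∑ n ∈ range (p+1), c n * (F n).eval x)^2
    = ∑ m ∈ range (p+1), ∑ n ∈ range (p+1),
        (c m * c n) * ∫ x in (0:ℝ)..1, (F m).eval x * (F n).eval x := by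
  have h1 : ∀ x : ℝ, (∑ n ∈ range (p+1), c n * (F n).eval x)^2
      = ∑ m ∈ range (p+1), ∑ n ∈ range (p+1),
          (c m * c n) * ((F m).eval x * (F n).eval x) := by
    intro x
    rw [pow_two, Finset.sum_mul_sum]
    exact Finset.sum_congr rfl fun m _ => Finset.sum_congr rfl fun n _ => by ring
  simp_rw [h1]
  rw [intervalIntegral.integral_finset_sum
    (f := fun m x => ∑ n ∈ range (p+1), (c m * c n) * ((F m).eval x * (F n).eval x)) (fun m _ =>
    (continuous_finset_sum _ (fun n _ =>
      continuous_const.mul ((F m).continuous.mul (F n).continuous))).intervalIntegrable _ _)]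
  refine Finset.sum_congr rfl fun m _ => ?_
  rw [intervalIntegral.integral_finset_sum
    (f := fun n x => (c m * c n) * ((F m).eval x * (F n).eval x)) (fun n _ =>
    (continuous_const.mul ((F m).continuous.mul (F n).continuous)).intervalIntegrable _ _)]
  exact Finset.sum_congr rfl fun n _ => by
    rw [intervalIntegral.integral_const_mul]


end MarkovAux

open MarkovAux Polynomial Finset

/-- Markov-type inverse inequality in `L²`: for every polynomial `w` of degree at most
`p` on `[0,1]`, `‖w'‖_{L²([0,1])} ≤ C p² ‖w‖_{L²([0,1])}` with an absolute constant `C`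
independent of `p` and `w`. -/
theorem markov_inverse_inequality_L2 :
    ∃ C > 0, ∀ (p : ℕ) (w : Polynomial ℝ), w.natDegree ≤ p →
      Real.sqrt (∫ x in (0:ℝ)..1, (w.derivative.eval x) ^ 2) ≤
        C * (p : ℝ) ^ 2 * Real.sqrt (∫ x in (0:ℝ)..1, (w.eval x) ^ 2) := by
  refine ⟨5, by norm_num, ?_⟩
  intro p w hw
  rcases Nat.eq_zero_or_pos p with hp | hp
  · subst hp
    have hw0 : derivative w = 0 := by
      rw [Polynomial.eq_C_of_natDegree_le_zero hw]
      simp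
    rw [hw0]
    simp
  · obtain ⟨c, hc⟩ := span p w hw
    have hp1 : (1:ℝ) ≤ (p:ℝ) := by exact_mod_cast hp
    set J : ℕ → ℕ → ℝ := fun m n =>
      ∫ x in (0:ℝ)..1, (derivative (Leg m)).eval x * (derivative (Leg n)).eval x with hJ
    set N : ℕ → ℝ := fun n => ((n.factorial : ℝ))^2 / (2*n+1) with hN
    have hNpos : ∀ n, 0 < N n := fun n => div_pos (by positivity) (by positivity)
    have hJsq : ∀ n, J n n = ∫ x in (0:ℝ)..1, (derivative (Leg n)).eval x ^ 2 := by
      intro n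
      simp only [hJ]
      simp_rw [sq]
    have hJnn : ∀ n, 0 ≤ J n n := by
      intro n
      rw [hJsq]
      exact integral_sq_nonneg fun x => (derivative (Leg n)).eval x
    have hLsq : ∀ m, (∫ x in (0:ℝ)..1, (Leg m).eval x * (Leg m).eval x) = N m := by
      intro m
      simp only [hN]
      rw [← normL m]
      simp_rw [sq]
    have hwev : ∀ x : ℝ, w.eval x = ∑ n ∈ range (p+1), c n * (Leg n).eval x := by
      intro x
      rw [hc, Polynomial.eval_finset_sum]
      exact Finset.sum_congr rfl fun n _ => by rw [Polynomial.eval_mul, Polynomial.eval_C]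
    have hwdev : ∀ x : ℝ, (derivative w).eval x
        = ∑ n ∈ range (p+1), c n * (derivative (Leg n)).eval x := by
      intro x
      rw [hc, Polynomial.derivative_sum, Polynomial.eval_finset_sum]
      exact Finset.sum_congr rfl fun n _ => by
        rw [Polynomial.derivative_C_mul, Polynomial.eval_mul, Polynomial.eval_C]
    have stepA : ∫ x in (0:ℝ)..1, (w.eval x)^2 = ∑ n ∈ range (p+1), (c n)^2 * N n := by
      simp_rw [hwev]
      rw [expand p c Leg]
      refine Finset.sum_congr rfl fun m hm => ?_
      rw [Finset.sum_eq_single m]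
      · rw [hLsq m]; ring
      · intro n _ hnm
        rw [ortho' m n fun h => hnm h.symm, mul_zero]
      · intro hm'; exact absurd hm hm'
    have stepB : ∫ x in (0:ℝ)..1, ((derivative w).eval x)^2
        = ∑ m ∈ range (p+1), ∑ n ∈ range (p+1), (c m * c n) * J m n := by
      simp_rw [hwdev]
      rw [expand p c (fun n => derivative (Leg n))]
    have stepC : ∑ m ∈ range (p+1), ∑ n ∈ range (p+1), (c m * c n) * J m n
        ≤ (∑ n ∈ range (p+1), |c n| * Real.sqrt (J n n))^2 := by
      have habs : ∀ m n, (c m * c n) * J m n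
          ≤ (|c m| * Real.sqrt (J m m)) * (|c n| * Real.sqrt (J n n)) := by
        intro m n
        have h2 : (J m n)^2 ≤ J m m * J n n := by
          rw [hJsq m, hJsq n]
          simp only [hJ]
          exact cs (derivative (Leg m)) (derivative (Leg n))
        have h1 : |J m n| ≤ Real.sqrt (J m m) * Real.sqrt (J n n) := by
          rw [← Real.sqrt_mul (hJnn m)]
          exact Real.abs_le_sqrt h2
        calc (c m * c n) * J m n ≤ |(c m * c n) * J m n| := le_abs_self _
          _ = |c m| * |c n| * |J m n| := by rw [abs_mul, abs_mul]
          _ ≤ |c m| * |c n| * (Real.sqrt (J m m) * Real.sqrt (J n n)) := by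
              apply mul_le_mul_of_nonneg_left h1 (by positivity)
          _ = (|c m| * Real.sqrt (J m m)) * (|c n| * Real.sqrt (J n n)) := by ring
      calc ∑ m ∈ range (p+1), ∑ n ∈ range (p+1), (c m * c n) * J m n
          ≤ ∑ m ∈ range (p+1), ∑ n ∈ range (p+1),
              (|c m| * Real.sqrt (J m m)) * (|c n| * Real.sqrt (J n n)) :=
            Finset.sum_le_sum fun m _ => Finset.sum_le_sum fun n _ => habs m n
        _ = (∑ n ∈ range (p+1), |c n| * Real.sqrt (J n n))^2 := by
            rw [pow_two, Finset.sum_mul_sum]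
    have stepD : (∑ n ∈ range (p+1), |c n| * Real.sqrt (J n n))^2
        ≤ (∑ n ∈ range (p+1), (c n)^2 * N n) * (∑ n ∈ range (p+1), J n n / N n) := by
      have key := Finset.sum_mul_sq_le_sq_mul_sq (range (p+1))
        (fun n => |c n| * Real.sqrt (N n)) (fun n => Real.sqrt (J n n / N n))
      have e1 : ∀ n, (|c n| * Real.sqrt (N n)) * Real.sqrt (J n n / N n)
          = |c n| * Real.sqrt (J n n) := by
        intro n
        rw [mul_assoc, ← Real.sqrt_mul (hNpos n).le, mul_div_cancel₀ _ (hNpos n).ne']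
      have e2 : ∀ n, (|c n| * Real.sqrt (N n))^2 = (c n)^2 * N n := by
        intro n; rw [mul_pow, sq_abs, Real.sq_sqrt (hNpos n).le]
      have e3 : ∀ n : ℕ, (Real.sqrt (J n n / N n))^2 = J n n / N n := fun n =>
        Real.sq_sqrt (div_nonneg (hJnn n) (hNpos n).le)
      simp_rw [e1, e2, e3] at key
      exact key
    have stepE : ∑ n ∈ range (p+1), J n n / N n ≤ 24*(p:ℝ)^4 := by
      have hterm : ∀ n ∈ range (p+1), J n n / N n ≤ 12*(p:ℝ)^3 := by
        intro n hn
        have hnp : n ≤ p := by simp at hn; omega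
        match n, hnp with
        | 0, _ =>
          have hd0 : derivative (Leg 0) = 0 := by
            have : Leg 0 = 1 := by simp [Leg]
            rw [this, Polynomial.derivative_one]
          have : J 0 0 = 0 := by
            simp only [hJ, hd0, Polynomial.eval_zero, mul_zero]
            simp
          rw [this, zero_div]
          positivity
        | (m+1), hnp =>
          have hv : J (m+1) (m+1) = 2*((m:ℝ)+1)*((m:ℝ)+2)*(((m+1).factorial : ℝ))^2 := by
            rw [hJsq]; exact dnorm m
          have hNv : N (m+1) = (((m+1).factorial : ℝ))^2 / (2*((m:ℝ)+1)+1) := by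
            simp only [hN]; push_cast; ring
          have hfac : (0:ℝ) < (((m+1).factorial : ℝ))^2 := by positivity
          have hratio : J (m+1) (m+1) / N (m+1) = 2*((m:ℝ)+1)*((m:ℝ)+2)*(2*((m:ℝ)+1)+1) := by
            rw [hv, hNv]
            push_cast
            field_simp
          rw [hratio]
          have h1 : ((m:ℝ)+1) ≤ (p:ℝ) := by exact_mod_cast hnp
          have h2 : ((m:ℝ)+2) ≤ 2*(p:ℝ) := by linarith
          have h3 : 2*((m:ℝ)+1)+1 ≤ 3*(p:ℝ) := by linarith
          have a1 : ((m:ℝ)+1)*((m:ℝ)+2) ≤ (p:ℝ)*(2*(p:ℝ)) :=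
            mul_le_mul h1 h2 (by positivity) (by positivity)
          have key : ((m:ℝ)+1)*((m:ℝ)+2)*(2*((m:ℝ)+1)+1) ≤ (p:ℝ)*(2*(p:ℝ))*(3*(p:ℝ)) :=
            mul_le_mul a1 h3 (by positivity) (by positivity)
          nlinarith [key]
      calc ∑ n ∈ range (p+1), J n n / N n ≤ ∑ _n ∈ range (p+1), 12*(p:ℝ)^3 :=
            Finset.sum_le_sum hterm
        _ = ((p:ℝ)+1) * (12*(p:ℝ)^3) := by
            rw [Finset.sum_const, Finset.card_range, nsmul_eq_mul]
            push_cast; ring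
        _ ≤ 24*(p:ℝ)^4 := by
            nlinarith [mul_nonneg (by linarith : (0:ℝ) ≤ (p:ℝ)-1) (by positivity : (0:ℝ) ≤ (p:ℝ)^3)]
    have big : ∫ x in (0:ℝ)..1, ((derivative w).eval x)^2
        ≤ 25*(p:ℝ)^4 * ∫ x in (0:ℝ)..1, (w.eval x)^2 := by
      have hwnn : 0 ≤ ∫ x in (0:ℝ)..1, (w.eval x)^2 :=
        integral_sq_nonneg fun x => w.eval x
      calc ∫ x in (0:ℝ)..1, ((derivative w).eval x)^2
          = ∑ m ∈ range (p+1), ∑ n ∈ range (p+1), (c m * c n) * J m n := stepB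
        _ ≤ (∑ n ∈ range (p+1), |c n| * Real.sqrt (J n n))^2 := stepC
        _ ≤ (∑ n ∈ range (p+1), (c n)^2 * N n) * (∑ n ∈ range (p+1), J n n / N n) := stepD
        _ = (∫ x in (0:ℝ)..1, (w.eval x)^2) * (∑ n ∈ range (p+1), J n n / N n) := by
            rw [stepA]
        _ ≤ (∫ x in (0:ℝ)..1, (w.eval x)^2) * (24*(p:ℝ)^4) := by
            apply mul_le_mul_of_nonneg_left stepE hwnn
        _ ≤ 25*(p:ℝ)^4 * ∫ x in (0:ℝ)..1, (w.eval x)^2 := by nlinarith [mul_nonneg (by positivity : (0:ℝ) ≤ (p:ℝ)^4) hwnn]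
    have lhs := Real.sqrt_le_sqrt big
    rw [show (25:ℝ)*(p:ℝ)^4 * ∫ x in (0:ℝ)..1, (w.eval x)^2
        = (5*(p:ℝ)^2)^2 * ∫ x in (0:ℝ)..1, (w.eval x)^2 by ring,
      Real.sqrt_mul (by positivity) _, Real.sqrt_sq (by positivity)] at lhs
    calc Real.sqrt (∫ x in (0:ℝ)..1, (w.derivative.eval x)^2)
        ≤ 5*(p:ℝ)^2 * Real.sqrt (∫ x in (0:ℝ)..1, (w.eval x)^2) := lhs
      _ = 5*(p:ℝ)^2 * Real.sqrt (∫ x in (0:ℝ)..1, (w.eval x)^2) := by ring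
end

section
/- For any point v on the boundary of a star-shaped region with center at the origin, a polynomial v of degree ≤ p satisfies the pointwise bound v(r)² ≤ C·p²·∫₀¹ v(s·r)² s ds for each fixed direction r, where C is an absolute constant. Specifically: for any one-variable polynomial q of degree ≤ p, q(1)² ≤ C·p²·∫₀¹ q(s)² s ds. -/
open MeasureTheory Polynomial

noncomputable section PBB

private lemma poly_intble (P : Polynomial ℝ) :
    IntervalIntegrable (fun x => P.eval x) volume (0:ℝ) 1 :=
  (P.continuous_aeval.intervalIntegrable 0 1)

private lemma poly_ftc (P : Polynomial ℝ) :
    ∫ x in (0:ℝ)..1, (Polynomial.derivative P).eval x = P.eval 1 - P.eval 0 := by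
  refine intervalIntegral.integral_eq_sub_of_hasDerivAt (fun x _ => P.hasDerivAt x) ?_
  exact (Polynomial.derivative P).continuous_aeval.intervalIntegrable 0 1

private lemma poly_ibp (u v : Polynomial ℝ) :
    ∫ x in (0:ℝ)..1, u.eval x * (Polynomial.derivative v).eval x
      = u.eval 1 * v.eval 1 - u.eval 0 * v.eval 0
        - ∫ x in (0:ℝ)..1, (Polynomial.derivative u).eval x * v.eval x := by
  have h := poly_ftc (u * v)
  rw [Polynomial.derivative_mul] at h
  have hsplit : ∫ x in (0:ℝ)..1,
      ((Polynomial.derivative u * v).eval x + (u * Polynomial.derivative v).eval x)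
      = (∫ x in (0:ℝ)..1, (Polynomial.derivative u).eval x * v.eval x)
        + ∫ x in (0:ℝ)..1, u.eval x * (Polynomial.derivative v).eval x := by
    rw [intervalIntegral.integral_add (poly_intble _) (poly_intble _)]
    simp [Polynomial.eval_mul]
  simp only [Polynomial.eval_add] at h
  rw [hsplit] at h
  simp only [Polynomial.eval_mul] at h
  linarith

private lemma dvd_iterate_derivative (a : ℝ) :
    ∀ (i m : ℕ) (g : Polynomial ℝ), i ≤ m →
      (X - C a) ^ (m - i) ∣ Polynomial.derivative^[i] ((X - C a) ^ m * g) := by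
  intro i
  induction i with
  | zero => intro m g _; simpa using Dvd.intro g rfl
  | succ i ih =>
    intro m g him
    obtain ⟨m', rfl⟩ : ∃ m', m = m' + 1 := ⟨m - 1, by omega⟩
    have hder : Polynomial.derivative ((X - C a) ^ (m' + 1) * g)
        = (X - C a) ^ m' * ((C ((m' : ℝ) + 1)) * g + (X - C a) * Polynomial.derivative g) := by
      rw [Polynomial.derivative_mul, Polynomial.derivative_pow]
      simp only [Polynomial.derivative_sub, Polynomial.derivative_X, Polynomial.derivative_C,
        sub_zero, mul_one, Nat.add_sub_cancel]
      push_cast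
      ring
    rw [Function.iterate_succ_apply, hder]
    have : m' + 1 - (i + 1) = m' - i := by omega
    rw [this]
    exact ih m' _ (by omega)

private lemma eval_iterate_derivative_eq_zero (a : ℝ) (i m : ℕ) (g : Polynomial ℝ)
    (h : i < m) :
    (Polynomial.derivative^[i] ((X - C a) ^ m * g)).eval a = 0 := by
  obtain ⟨r, hr⟩ := dvd_iterate_derivative a i m g h.le
  rw [hr]
  have : m - i ≠ 0 := by omega
  simp [Polynomial.eval_pow, zero_pow this]

private lemma eval_iterate_derivative_self (a : ℝ) :
    ∀ (n : ℕ) (g : Polynomial ℝ),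
      (Polynomial.derivative^[n] ((X - C a) ^ n * g)).eval a = (n.factorial : ℝ) * g.eval a := by
  intro n
  induction n with
  | zero => intro g; simp
  | succ n ih =>
    intro g
    have hder : Polynomial.derivative ((X - C a) ^ (n + 1) * g)
        = (X - C a) ^ n * ((C ((n : ℝ) + 1)) * g + (X - C a) * Polynomial.derivative g) := by
      rw [Polynomial.derivative_mul, Polynomial.derivative_pow]
      simp only [Polynomial.derivative_sub, Polynomial.derivative_X, Polynomial.derivative_C,
        sub_zero, mul_one, Nat.add_sub_cancel]
      push_cast
      ring
    rw [Function.iterate_succ_apply, hder, ih]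
    simp [Nat.factorial_succ]
    ring

private lemma eval_iterate_derivative_succ (a : ℝ) :
    ∀ (n : ℕ) (g : Polynomial ℝ),
      (Polynomial.derivative^[n + 1] ((X - C a) ^ n * g)).eval a
        = ((n + 1).factorial : ℝ) * (Polynomial.derivative g).eval a := by
  intro n
  induction n with
  | zero => intro g; simp
  | succ n ih =>
    intro g
    have hder : Polynomial.derivative ((X - C a) ^ (n + 1) * g)
        = (X - C a) ^ n * ((C ((n : ℝ) + 1)) * g + (X - C a) * Polynomial.derivative g) := by
      rw [Polynomial.derivative_mul, Polynomial.derivative_pow]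
      simp only [Polynomial.derivative_sub, Polynomial.derivative_X, Polynomial.derivative_C,
        sub_zero, mul_one, Nat.add_sub_cancel]
      push_cast
      ring
    rw [Function.iterate_succ_apply, hder, ih]
    simp [Nat.factorial_succ]
    ring

end PBB

noncomputable section PBB2
open Polynomial

private def Wp (n : ℕ) : Polynomial ℝ := (X - C 0) ^ n * (X - C 1) ^ n

private lemma Wp_comm (n : ℕ) : Wp n = (X - C 1) ^ n * (X - C 0) ^ n := mul_comm _ _

private lemma eval_Wp_iter_zero (b : ℝ) (hb : b = 0 ∨ b = 1) (i n : ℕ) (h : i < n) :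
    (Polynomial.derivative^[i] (Wp n)).eval b = 0 := by
  rcases hb with rfl | rfl
  · exact eval_iterate_derivative_eq_zero 0 i n _ h
  · rw [Wp_comm]; exact eval_iterate_derivative_eq_zero 1 i n _ h

private lemma orth : ∀ (i : ℕ) (m n : ℕ) (q : Polynomial ℝ), i ≤ m → m ≤ n →
    Polynomial.derivative^[i] q = 0 →
    (∫ x in (0:ℝ)..1, q.eval x * (Polynomial.derivative^[m] (Wp n)).eval x) = 0 := by
  intro i
  induction i with
  | zero =>
    intro m n q _ _ hq
    simp only [Function.iterate_zero, id] at hq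
    simp [hq]
  | succ i ih =>
    intro m n q him hmn hq
    obtain ⟨m', rfl⟩ : ∃ m', m = m' + 1 := ⟨m - 1, by omega⟩
    rw [Function.iterate_succ_apply']
    rw [poly_ibp q (Polynomial.derivative^[m'] (Wp n))]
    rw [eval_Wp_iter_zero 1 (Or.inr rfl) m' n (by omega),
      eval_Wp_iter_zero 0 (Or.inl rfl) m' n (by omega)]
    rw [ih m' n (Polynomial.derivative q) (by omega) (by omega)
      (by rw [← Function.iterate_succ_apply]; exact hq)]
    ring

private def Rp (n : ℕ) : Polynomial ℝ := Polynomial.derivative^[n] (Wp n)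

private lemma Rp_eval_one (n : ℕ) : (Rp n).eval 1 = (n.factorial : ℝ) := by
  rw [Rp, Wp_comm, eval_iterate_derivative_self]
  simp

private lemma Rp_eval_zero (n : ℕ) : (Rp n).eval 0 = (n.factorial : ℝ) * (-1) ^ n := by
  rw [Rp, Wp, eval_iterate_derivative_self]
  simp

private lemma Rp_deriv_eval_one (n : ℕ) :
    (Polynomial.derivative (Rp n)).eval 1 = ((n + 1).factorial : ℝ) * n := by
  have : Polynomial.derivative (Polynomial.derivative^[n] (Wp n))
      = Polynomial.derivative^[n + 1] (Wp n) := (Function.iterate_succ_apply' _ _ _).symm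
  rw [Rp, this, Wp_comm, eval_iterate_derivative_succ]
  congr 1
  rw [Polynomial.derivative_pow]
  simp

private lemma natDegree_Rp_le (n : ℕ) : (Rp n).natDegree ≤ n := by
  have h1 : (Wp n).natDegree ≤ 2 * n := by
    refine le_trans (Polynomial.natDegree_mul_le) ?_
    have hx : ((X : Polynomial ℝ) - C 0).natDegree ≤ 1 := Polynomial.natDegree_X_sub_C_le 0
    have hx1 : ((X : Polynomial ℝ) - C 1).natDegree ≤ 1 := Polynomial.natDegree_X_sub_C_le 1
    have := Polynomial.natDegree_pow_le (p := (X : Polynomial ℝ) - C 0) (n := n)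
    have := Polynomial.natDegree_pow_le (p := (X : Polynomial ℝ) - C 1) (n := n)
    calc ((X - C 0:Polynomial ℝ)^n).natDegree + ((X - C 1:Polynomial ℝ)^n).natDegree
        ≤ n * ((X - C 0:Polynomial ℝ)).natDegree + n * ((X - C 1:Polynomial ℝ)).natDegree := by
          exact Nat.add_le_add (Polynomial.natDegree_pow_le) (Polynomial.natDegree_pow_le)
      _ ≤ n * 1 + n * 1 := by exact Nat.add_le_add (Nat.mul_le_mul_left _ hx) (Nat.mul_le_mul_left _ hx1)
      _ = 2 * n := by ring
  calc (Rp n).natDegree ≤ (Wp n).natDegree - n := Polynomial.natDegree_iterate_derivative _ _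
    _ ≤ 2 * n - n := by omega
    _ = n := by omega

end PBB2

noncomputable section PBB3
open Polynomial

private lemma contEval (P : Polynomial ℝ) : Continuous fun x : ℝ => P.eval x :=
  P.continuous_aeval

private lemma intble_mul (P Q : Polynomial ℝ) :
    IntervalIntegrable (fun x => P.eval x * Q.eval x) volume (0:ℝ) 1 :=
  ((contEval P).mul (contEval Q)).intervalIntegrable 0 1

private def Hp (n : ℕ) : Polynomial ℝ :=
  C (1 / (2 * (n.factorial : ℝ))) * Rp n + C (1 / (2 * ((n + 1).factorial : ℝ))) * Rp (n + 1)

private lemma Hp_eval_one (n : ℕ) : (Hp n).eval 1 = 1 := by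
  have h1 : (n.factorial : ℝ) ≠ 0 := Nat.cast_ne_zero.mpr n.factorial_ne_zero
  have h2 : ((n + 1).factorial : ℝ) ≠ 0 := Nat.cast_ne_zero.mpr (n + 1).factorial_ne_zero
  simp only [Hp, Polynomial.eval_add, Polynomial.eval_mul, Polynomial.eval_C, Rp_eval_one]
  field_simp
  ring

private lemma Hp_eval_zero (n : ℕ) : (Hp n).eval 0 = 0 := by
  have h1 : (n.factorial : ℝ) ≠ 0 := Nat.cast_ne_zero.mpr n.factorial_ne_zero
  have h2 : ((n + 1).factorial : ℝ) ≠ 0 := Nat.cast_ne_zero.mpr (n + 1).factorial_ne_zero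
  simp only [Hp, Polynomial.eval_add, Polynomial.eval_mul, Polynomial.eval_C, Rp_eval_zero,
    pow_succ]
  field_simp
  ring

private lemma Hp_deriv_eval_one (n : ℕ) :
    (Polynomial.derivative (Hp n)).eval 1 = ((n : ℝ) + 1) ^ 2 := by
  have h1 : (n.factorial : ℝ) ≠ 0 := Nat.cast_ne_zero.mpr n.factorial_ne_zero
  have h2 : ((n + 1).factorial : ℝ) ≠ 0 := Nat.cast_ne_zero.mpr (n + 1).factorial_ne_zero
  simp only [Hp, Polynomial.derivative_add, Polynomial.derivative_C_mul,
    Polynomial.eval_add, Polynomial.eval_mul, Polynomial.eval_C,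
    Rp_deriv_eval_one, Nat.factorial_succ]
  push_cast
  field_simp
  ring

private lemma natDegree_Hp_le (n : ℕ) : (Hp n).natDegree ≤ n + 1 := by
  rw [Hp]
  refine le_trans (Polynomial.natDegree_add_le _ _) (max_le ?_ ?_)
  · exact le_trans (Polynomial.natDegree_C_mul_le _ _)
      (le_trans (natDegree_Rp_le n) (Nat.le_succ n))
  · exact le_trans (Polynomial.natDegree_C_mul_le _ _) (natDegree_Rp_le (n+1))

private lemma orthR (i n : ℕ) (q : Polynomial ℝ) (h : i ≤ n)
    (hq : Polynomial.derivative^[i] q = 0) :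
    (∫ x in (0:ℝ)..1, q.eval x * (Rp n).eval x) = 0 :=
  orth i n n q h le_rfl hq

private lemma orthH (n : ℕ) (q : Polynomial ℝ) (hq : Polynomial.derivative^[n] q = 0) :
    (∫ x in (0:ℝ)..1, q.eval x * (Hp n).eval x) = 0 := by
  have hsplit : ∀ x : ℝ, q.eval x * (Hp n).eval x
      = (1 / (2 * (n.factorial : ℝ))) * (q.eval x * (Rp n).eval x)
        + (1 / (2 * ((n+1).factorial : ℝ))) * (q.eval x * (Rp (n+1)).eval x) := by
    intro x
    simp only [Hp, Polynomial.eval_add, Polynomial.eval_mul, Polynomial.eval_C]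
    ring
  simp_rw [hsplit]
  rw [intervalIntegral.integral_add ((intble_mul q (Rp n)).const_mul _)
      ((intble_mul q (Rp (n+1))).const_mul _),
    intervalIntegral.integral_const_mul, intervalIntegral.integral_const_mul,
    orthR n n q le_rfl hq, orthR n (n+1) q (Nat.le_succ n) hq]
  ring

private lemma main_lemma (n : ℕ) (q : Polynomial ℝ) (hq : q.natDegree ≤ n) :
    (q.eval 1) ^ 2 ≤ ((n : ℝ) + 1) ^ 2 * ∫ x in (0:ℝ)..1, (q.eval x) ^ 2 := by
  set G := Polynomial.derivative (Hp n) with hG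
  have hq' : Polynomial.derivative^[n] (Polynomial.derivative q) = 0 := by
    rw [← Function.iterate_succ_apply]
    exact Polynomial.iterate_derivative_eq_zero (by omega)
  have hB : (∫ x in (0:ℝ)..1, q.eval x * G.eval x) = q.eval 1 := by
    rw [hG, poly_ibp q (Hp n), Hp_eval_one, Hp_eval_zero, orthH n _ hq']
    ring
  have hGG : Polynomial.derivative^[n] (Polynomial.derivative G) = 0 := by
    rw [hG, ← Function.iterate_succ_apply, ← Function.iterate_succ_apply]
    exact Polynomial.iterate_derivative_eq_zero
      (lt_of_le_of_lt (natDegree_Hp_le n) (by omega))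
  have hK : (∫ x in (0:ℝ)..1, G.eval x * G.eval x) = ((n : ℝ) + 1) ^ 2 := by
    conv_lhs => rw [hG]
    rw [poly_ibp _ (Hp n), Hp_eval_one, Hp_eval_zero, ← hG, Hp_deriv_eval_one,
      orthH n _ hGG]
    ring
  set A := ∫ x in (0:ℝ)..1, (q.eval x) ^ 2 with hA
  set B := q.eval 1 with hBdef
  set K : ℝ := ((n : ℝ) + 1) ^ 2 with hKdef
  have hKpos : (0:ℝ) < K := by positivity
  set t : ℝ := B / K with ht
  have hexp : (∫ x in (0:ℝ)..1, (q.eval x - t * G.eval x) ^ 2)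
      = A - 2 * t * B + t ^ 2 * K := by
    have h1 : ∀ x : ℝ, (q.eval x - t * G.eval x) ^ 2
        = q.eval x * q.eval x - (2 * t) * (q.eval x * G.eval x)
          + t ^ 2 * (G.eval x * G.eval x) := by intro x; ring
    have h2 : A = ∫ x in (0:ℝ)..1, q.eval x * q.eval x := by
      rw [hA]; congr 1; ext x; ring
    simp_rw [h1]
    rw [intervalIntegral.integral_add ((intble_mul q q).sub ((intble_mul q G).const_mul _))
        ((intble_mul G G).const_mul _),
      intervalIntegral.integral_sub (intble_mul q q) ((intble_mul q G).const_mul _),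
      intervalIntegral.integral_const_mul, intervalIntegral.integral_const_mul,
      hB, hK, ← h2]
  have h0 : (0:ℝ) ≤ A - 2 * t * B + t ^ 2 * K := by
    rw [← hexp]
    exact intervalIntegral.integral_nonneg (by norm_num) (fun x _ => sq_nonneg _)
  have hKne : K ≠ 0 := ne_of_gt hKpos
  have heq : A - 2 * t * B + t ^ 2 * K = A - B ^ 2 / K := by
    rw [ht]; field_simp; ring
  rw [heq] at h0
  have hle : B ^ 2 / K ≤ A := by linarith
  calc B ^ 2 = (B ^ 2 / K) * K := by field_simp
    _ ≤ A * K := mul_le_mul_of_nonneg_right hle (le_of_lt hKpos)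
    _ = K * A := mul_comm _ _

end PBB3

open MeasureTheory

/-- Pointwise boundary bound from identity (3.5): for any one-variable polynomial `q` of
degree at most `p` (`p ≥ 1`), `q(1)² ≤ C p² ∫₀¹ q(s)² s ds` with an absolute constant
`C`. -/
theorem pointwise_boundary_bound :
    ∃ C > 0, ∀ (p : ℕ), 1 ≤ p → ∀ q : Polynomial ℝ, q.natDegree ≤ p →
      (q.eval 1) ^ 2 ≤ C * (p : ℝ) ^ 2 * ∫ s in (0:ℝ)..1, (q.eval s) ^ 2 * s := by
  refine ⟨9, by norm_num, fun p hp q hq => ?_⟩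
  set Q : Polynomial ℝ := Polynomial.X * q with hQ
  have hQdeg : Q.natDegree ≤ p + 1 := by
    refine le_trans Polynomial.natDegree_mul_le ?_
    simpa [Polynomial.natDegree_X] using by omega
  have hmain := main_lemma (p + 1) Q hQdeg
  have hQ1 : Q.eval 1 = q.eval 1 := by simp [hQ]
  have hint1 : IntervalIntegrable (fun x => (Q.eval x) ^ 2) volume (0:ℝ) 1 :=
    ((contEval Q).pow 2).intervalIntegrable 0 1
  have hint2 : IntervalIntegrable (fun x => (q.eval x) ^ 2 * x) volume (0:ℝ) 1 :=
    (((contEval q).pow 2).mul continuous_id).intervalIntegrable 0 1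
  have hmono : (∫ x in (0:ℝ)..1, (Q.eval x) ^ 2) ≤ ∫ x in (0:ℝ)..1, (q.eval x) ^ 2 * x := by
    refine intervalIntegral.integral_mono_on (by norm_num) hint1 hint2 ?_
    intro x hx
    simp only [hQ, Polynomial.eval_mul, Polynomial.eval_X]
    obtain ⟨hx0, hx1⟩ := hx
    have h1 : (x * q.eval x) ^ 2 = (q.eval x) ^ 2 * x * x := by ring
    rw [h1]
    have h2 : (q.eval x) ^ 2 * x * x ≤ (q.eval x) ^ 2 * x * 1 := by
      have : (0:ℝ) ≤ (q.eval x) ^ 2 * x := by positivity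
      exact mul_le_mul_of_nonneg_left hx1 this
    simpa using h2
  have hnn : (0:ℝ) ≤ ∫ x in (0:ℝ)..1, (q.eval x) ^ 2 * x := by
    refine intervalIntegral.integral_nonneg (by norm_num) ?_
    intro x hx
    have : (0:ℝ) ≤ x := hx.1
    positivity
  have hcoef : (((p:ℝ) + 1) + 1) ^ 2 ≤ 9 * (p : ℝ) ^ 2 := by
    have hp' : (1:ℝ) ≤ (p:ℝ) := by exact_mod_cast hp
    nlinarith
  calc (q.eval 1) ^ 2 = (Q.eval 1) ^ 2 := by rw [hQ1]
    _ ≤ (((p + 1 : ℕ) : ℝ) + 1) ^ 2 * ∫ x in (0:ℝ)..1, (Q.eval x) ^ 2 := hmain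
    _ ≤ (((p:ℝ) + 1) + 1) ^ 2 * ∫ x in (0:ℝ)..1, (q.eval x) ^ 2 * x := by
        push_cast
        exact mul_le_mul_of_nonneg_left hmono (by positivity)
    _ ≤ 9 * (p : ℝ) ^ 2 * ∫ x in (0:ℝ)..1, (q.eval x) ^ 2 * x :=
        mul_le_mul_of_nonneg_right hcoef hnn
end
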